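/- arXiv:2101.00685 — 5 statements merged into one kernel-verified Lean document; each statement's English description precedes it below -/
import Mathlib

section
/- Let Γ be a discrete amenable group and let E ⊆ Γ. If for every left Følner net (Φ_α) for Γ there exists an index α such that Φ_α ∩ E ≠ ∅, then E is left syndetic (i.e., there is a finite set F ⊆ Γ with ⋃_{γ∈F} γE = Γ). -/
open Filter

/-- A left Følner net for a discrete group `G`: a net of non-empty finite subsets `Φ α`
with `|Φ α ∆ γΦ α| / |Φ α| → 0` for every `γ : G`. -/
def IsFolnerNet {G ι : Type} [Group G] [DecidableEq G] [Preorder ι]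
    (Φ : ι → Finset G) : Prop :=
  (∀ α, (Φ α).Nonempty) ∧
  ∀ γ : G, Tendsto
    (fun α => ((symmDiff (Φ α) ((Φ α).image (γ * ·))).card : ℝ) / (Φ α).card)
    atTop (nhds 0)

/-- A left Følner net bundled with its directed index set. -/
structure FolnerNet (G : Type) [Group G] [DecidableEq G] where
  ι : Type
  [pr : Preorder ι]
  [dir : IsDirected ι (· ≤ ·)]
  [ne : Nonempty ι]
  sets : ι → Finset G
  isFolner : IsFolnerNet sets

attribute [instance] FolnerNet.pr FolnerNet.dir FolnerNet.ne

/-- `E` is left syndetic: finitely many left translates of `E` cover `G`. -/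
def IsSyndetic {G : Type} [Group G] (E : Set G) : Prop :=
  ∃ F : Finset G, ∀ x : G, ∃ γ ∈ F, γ⁻¹ * x ∈ E

/-- If every left Følner net for the amenable group `G` meets `E`, then `E` is left syndetic. -/
theorem folnerNet_meets_imp_syndetic {G : Type} [Group G] [DecidableEq G]
    (hamen : Nonempty (FolnerNet G)) (E : Set G)
    (hmeet : ∀ N : FolnerNet G, ∃ α : N.ι, ∃ x ∈ N.sets α, x ∈ E) :
    IsSyndetic E := by
  by_contra hsyn
  obtain ⟨N⟩ := hamen
  have hch : ∀ α : N.ι, ∃ g : G, ∀ y ∈ N.sets α, y * g ∉ E := by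
    intro α
    by_contra h
    push_neg at h
    refine hsyn ⟨(N.sets α).image (·⁻¹), fun x => ?_⟩
    obtain ⟨y, hy, hyE⟩ := h x
    exact ⟨y⁻¹, Finset.mem_image_of_mem _ hy, by simpa using hyE⟩
  choose g hg using hch
  have hF : IsFolnerNet (fun α => (N.sets α).image (· * g α)) := by
        obtain ⟨hne, htd⟩ := N.isFolner
        refine ⟨fun α => (hne α).image _, fun γ => ?_⟩
        have key : ∀ α, ((symmDiff ((N.sets α).image (· * g α))
            (((N.sets α).image (· * g α)).image (γ * ·))).card : ℝ)
              / ((N.sets α).image (· * g α)).card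
            = ((symmDiff (N.sets α) ((N.sets α).image (γ * ·))).card : ℝ) / (N.sets α).card := by
          intro α
          have hinj : Function.Injective (· * g α) := mul_left_injective (g α)
          have h1 : ((N.sets α).image (· * g α)).image (γ * ·)
              = ((N.sets α).image (γ * ·)).image (· * g α) := by
            rw [Finset.image_image, Finset.image_image]
            exact Finset.image_congr (fun x _ => (mul_assoc γ x (g α)).symm)
          rw [h1, ← Finset.image_symmDiff _ _ hinj,
            Finset.card_image_of_injective _ hinj, Finset.card_image_of_injective _ hinj]
        simpa only [key] using htd γ
  obtain ⟨α, x, hx, hxE⟩ := hmeet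
    (@FolnerNet.mk G _ _ N.ι N.pr N.dir N.ne (fun α => (N.sets α).image (· * g α)) hF)
  obtain ⟨y, hy, rfl⟩ := Finset.mem_image.1 hx
  exact hg α y hy hxE
end

section
/- For every A ⊆ ℤ, the interval lower Banach density liminf_{b−a→∞} |A ∩ {a,…,b}|/(b−a+1) equals the infimum over all Følner sequences (F_n) for ℤ of liminf_{n→∞} |A ∩ F_n|/|F_n|. -/
open Filter

/-- A Følner sequence for `ℤ`: non-empty finite sets `F n` with
`|F n ∆ (k + F n)| / |F n| → 0` for every `k : ℤ`. -/
def IsFolnerSeq (F : ℕ → Finset ℤ) : Prop :=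
  (∀ n, (F n).Nonempty) ∧
  ∀ k : ℤ, Tendsto
    (fun n => ((symmDiff (F n) ((F n).image (k + ·))).card : ℝ) / (F n).card)
    atTop (nhds 0)

lemma ncard_inter_coe (A : Set ℤ) (s : Finset ℤ) [DecidablePred (· ∈ A)] :
    Set.ncard (A ∩ ↑s) = (s.filter (· ∈ A)).card := by
  rw [← Set.ncard_coe_finset]
  congr 1
  ext x
  simp [and_comm]

lemma key_shift (A : Set ℤ) (F : Finset ℤ) (j : ℤ) :
    Set.ncard (A ∩ ↑(F.image (j + ·))) ≤
      Set.ncard (A ∩ ↑F) + (symmDiff F (F.image (j + ·))).card := by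
  classical
  set G := F.image (j + ·) with hG
  have hsub : A ∩ ↑G ⊆ (A ∩ ↑F) ∪ ↑(G \ F) := by
    intro x hx
    by_cases h : x ∈ F
    · exact Or.inl ⟨hx.1, h⟩
    · exact Or.inr (by simpa using ⟨hx.2, h⟩)
  calc Set.ncard (A ∩ ↑G) ≤ Set.ncard ((A ∩ ↑F) ∪ ↑(G \ F)) :=
        Set.ncard_le_ncard hsub
          ((F.finite_toSet.inter_of_right A).union (G \ F).finite_toSet)
    _ ≤ Set.ncard (A ∩ ↑F) + Set.ncard (↑(G \ F) : Set ℤ) := Set.ncard_union_le _ _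
    _ ≤ Set.ncard (A ∩ ↑F) + (symmDiff F G).card := by
        rw [Set.ncard_coe_finset]
        exact Nat.add_le_add_left (Finset.card_le_card
          (by rw [symmDiff_def]; exact Finset.subset_union_right)) _

lemma key_count (A : Set ℤ) (F : Finset ℤ) (ℓ : ℤ) :
    ∑ j ∈ Finset.Icc (1 : ℤ) ℓ, Set.ncard (A ∩ ↑(F.image (j + ·))) =
      ∑ x ∈ F, Set.ncard (A ∩ Set.Icc (x + 1) (x + ℓ)) := by
  classical
  have h1 : ∀ j : ℤ, Set.ncard (A ∩ ↑(F.image (j + ·))) =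
      (F.filter (fun x => j + x ∈ A)).card := by
    intro j
    rw [ncard_inter_coe, Finset.filter_image,
      Finset.card_image_of_injective _ (add_right_injective j)]
  have h2 : ∀ x : ℤ, Set.ncard (A ∩ Set.Icc (x + 1) (x + ℓ)) =
      ((Finset.Icc (x + 1) (x + ℓ)).filter (· ∈ A)).card := by
    intro x
    rw [← Finset.coe_Icc, ncard_inter_coe]
  simp only [h1, h2, Finset.card_filter]
  rw [Finset.sum_comm]
  refine Finset.sum_congr rfl fun x _ => ?_
  rw [← Finset.image_add_left_Icc, Finset.sum_image (fun a _ b _ h => by omega)]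
  exact Finset.sum_congr rfl fun j _ => by rw [add_comm x j]

lemma symmdiff_Icc_card_le (a b k : ℤ) :
    (symmDiff (Finset.Icc a b) ((Finset.Icc a b).image (k + ·))).card ≤ 2 * k.natAbs := by
  rw [Finset.image_add_left_Icc, symmDiff_def]
  rcases le_or_gt 0 k with hk | hk
  · have h1 : Finset.Icc a b \ Finset.Icc (k + a) (k + b) ⊆ Finset.Ico a (a + k) := by
      intro x hx
      simp only [Finset.mem_sdiff, Finset.mem_Icc, not_and, not_le, Finset.mem_Ico] at hx ⊢
      refine ⟨hx.1.1, ?_⟩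
      by_contra h
      push_neg at h
      exact absurd (hx.2 (by omega)) (by omega)
    have h2 : Finset.Icc (k + a) (k + b) \ Finset.Icc a b ⊆ Finset.Ioc b (b + k) := by
      intro x hx
      simp only [Finset.mem_sdiff, Finset.mem_Icc, not_and, not_le, Finset.mem_Ioc] at hx ⊢
      constructor
      · by_contra h
        push_neg at h
        exact absurd (hx.2 (by omega)) (by omega)
      · omega
    calc ((Finset.Icc a b \ Finset.Icc (k + a) (k + b)) ⊔
        (Finset.Icc (k + a) (k + b) \ Finset.Icc a b)).card
        ≤ _ + _ := Finset.card_union_le _ _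
      _ ≤ (Finset.Ico a (a + k)).card + (Finset.Ioc b (b + k)).card :=
          Nat.add_le_add (Finset.card_le_card h1) (Finset.card_le_card h2)
      _ ≤ 2 * k.natAbs := by rw [Int.card_Ico, Int.card_Ioc]; omega
  · have h1 : Finset.Icc a b \ Finset.Icc (k + a) (k + b) ⊆ Finset.Ioc (b + k) b := by
      intro x hx
      simp only [Finset.mem_sdiff, Finset.mem_Icc, not_and, not_le, Finset.mem_Ioc] at hx ⊢
      constructor
      · by_contra h
        push_neg at h
        exact absurd (hx.2 (by omega)) (by omega)
      · exact hx.1.2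
    have h2 : Finset.Icc (k + a) (k + b) \ Finset.Icc a b ⊆ Finset.Ico (a + k) a := by
      intro x hx
      simp only [Finset.mem_sdiff, Finset.mem_Icc, not_and, not_le, Finset.mem_Ico] at hx ⊢
      refine ⟨by omega, ?_⟩
      by_contra h
      push_neg at h
      exact absurd (hx.2 (by omega)) (by omega)
    calc ((Finset.Icc a b \ Finset.Icc (k + a) (k + b)) ⊔
        (Finset.Icc (k + a) (k + b) \ Finset.Icc a b)).card
        ≤ _ + _ := Finset.card_union_le _ _
      _ ≤ (Finset.Ioc (b + k) b).card + (Finset.Ico (a + k) a).card :=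
          Nat.add_le_add (Finset.card_le_card h1) (Finset.card_le_card h2)
      _ ≤ 2 * k.natAbs := by rw [Int.card_Ico, Int.card_Ioc]; omega

lemma main_ineq (A : Set ℤ) (F : Finset ℤ) (hF : 0 < (F.card : ℝ)) (ℓ : ℤ) (hℓ : 1 ≤ ℓ)
    (c : ℝ) (hint : ∀ x : ℤ, c * ℓ ≤ (Set.ncard (A ∩ Set.Icc (x + 1) (x + ℓ)) : ℝ)) :
    c ≤ (Set.ncard (A ∩ ↑F) : ℝ) / F.card +
      (∑ j ∈ Finset.Icc (1 : ℤ) ℓ,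
        ((symmDiff F (F.image (j + ·))).card : ℝ) / F.card) / ℓ := by
  have hℓR : (0 : ℝ) < (ℓ : ℝ) := by exact_mod_cast hℓ.trans_lt' zero_lt_one
  have h1 : c * ℓ * F.card ≤ ∑ x ∈ F, (Set.ncard (A ∩ Set.Icc (x + 1) (x + ℓ)) : ℝ) := by
    calc c * ℓ * F.card = ∑ _x ∈ F, c * ℓ := by rw [Finset.sum_const]; ring
      _ ≤ _ := Finset.sum_le_sum fun x _ => hint x
  have hcardIcc : (Finset.Icc (1 : ℤ) ℓ).card = ℓ.toNat := by
    rw [Int.card_Icc]; omega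
  have h2 : ∑ x ∈ F, (Set.ncard (A ∩ Set.Icc (x + 1) (x + ℓ)) : ℝ) ≤
      (ℓ : ℝ) * (Set.ncard (A ∩ ↑F) : ℝ) +
        ∑ j ∈ Finset.Icc (1 : ℤ) ℓ, ((symmDiff F (F.image (j + ·))).card : ℝ) := by
    have hcast : ∑ x ∈ F, (Set.ncard (A ∩ Set.Icc (x + 1) (x + ℓ)) : ℝ) =
        ∑ j ∈ Finset.Icc (1 : ℤ) ℓ, (Set.ncard (A ∩ ↑(F.image (j + ·))) : ℝ) := by
      exact_mod_cast congrArg (Nat.cast : ℕ → ℝ) (key_count A F ℓ).symm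
    rw [hcast]
    have hle : ∑ j ∈ Finset.Icc (1 : ℤ) ℓ, (Set.ncard (A ∩ ↑(F.image (j + ·))) : ℝ) ≤
        ∑ j ∈ Finset.Icc (1 : ℤ) ℓ, ((Set.ncard (A ∩ ↑F) : ℝ) +
          ((symmDiff F (F.image (j + ·))).card : ℝ)) := by
      refine Finset.sum_le_sum fun j _ => ?_
      exact_mod_cast key_shift A F j
    refine hle.trans ?_
    rw [Finset.sum_add_distrib, Finset.sum_const, hcardIcc, nsmul_eq_mul]
    have : (ℓ.toNat : ℝ) = (ℓ : ℝ) := by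
      rw [← Int.cast_natCast]; congr 1; omega
    rw [this]
  have key : c * ((ℓ : ℝ) * F.card) ≤ (ℓ : ℝ) * (Set.ncard (A ∩ ↑F) : ℝ) +
      ∑ j ∈ Finset.Icc (1 : ℤ) ℓ, ((symmDiff F (F.image (j + ·))).card : ℝ) := by
    calc c * ((ℓ : ℝ) * F.card) = c * ℓ * F.card := by ring
      _ ≤ _ := h1.trans h2
  have hdiv := (le_div_iff₀ (by positivity : (0:ℝ) < (ℓ : ℝ) * F.card)).mpr key
  have habs : ∀ x y z w : ℝ, z ≠ 0 → w ≠ 0 → (w * x + y) / (w * z) = x / z + y / z / w := by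
    intro x y z w hz hw; field_simp
  rw [← Finset.sum_div, ← habs _ _ _ _ (ne_of_gt hF) (ne_of_gt hℓR)]
  exact hdiv

lemma isFolner_Icc (a b : ℕ → ℤ) (h : ∀ n : ℕ, (n : ℤ) ≤ b n - a n) :
    IsFolnerSeq (fun n => Finset.Icc (a n) (b n)) := by
  constructor
  · intro n
    exact Finset.nonempty_Icc.mpr (by have := h n; omega)
  · intro k
    have hcard : ∀ n : ℕ, ((n : ℝ) + 1) ≤ ((Finset.Icc (a n) (b n)).card : ℝ) := by
      intro n
      have h2 : (n + 1 : ℕ) ≤ (Finset.Icc (a n) (b n)).card := by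
        rw [Int.card_Icc]; have := h n; omega
      exact_mod_cast Nat.cast_le.mpr h2
    have hub : ∀ n : ℕ,
        ((symmDiff (Finset.Icc (a n) (b n)) ((Finset.Icc (a n) (b n)).image (k + ·))).card : ℝ) /
          ((Finset.Icc (a n) (b n)).card : ℝ) ≤ (2 * (k.natAbs : ℝ)) / ((n : ℝ) + 1) := by
      intro n
      refine div_le_div₀ (by positivity) ?_ (by positivity) (hcard n)
      exact_mod_cast symmdiff_Icc_card_le (a n) (b n) k
    have hlb : ∀ n : ℕ, (0 : ℝ) ≤
        ((symmDiff (Finset.Icc (a n) (b n)) ((Finset.Icc (a n) (b n)).image (k + ·))).card : ℝ) /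
          ((Finset.Icc (a n) (b n)).card : ℝ) := fun n => by positivity
    have htop : Tendsto (fun n : ℕ => (2 * (k.natAbs : ℝ)) / ((n : ℝ) + 1)) atTop (nhds 0) :=
      Tendsto.div_atTop tendsto_const_nhds
        (tendsto_atTop_add_const_right _ 1 tendsto_natCast_atTop_atTop)
    exact tendsto_of_tendsto_of_tendsto_of_le_of_le tendsto_const_nhds htop hlb hub

/-- For every `A ⊆ ℤ`, the interval lower Banach density
`liminf_{b-a→∞} |A ∩ {a,…,b}| / (b-a+1)` equals the infimum over all Følner sequences
`(F n)` for `ℤ` of `liminf_n |A ∩ F n| / |F n|`. -/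
theorem interval_lowerBanachDensity_eq_inf_folner (A : Set ℤ) :
    Filter.liminf
        (fun q : ℤ × ℤ => (Set.ncard (A ∩ Set.Icc q.1 q.2) : ℝ) / ((q.2 : ℝ) - q.1 + 1))
        (Filter.comap (fun q : ℤ × ℤ => q.2 - q.1) atTop)
      = sInf {x : ℝ | ∃ F : ℕ → Finset ℤ, IsFolnerSeq F ∧
          x = Filter.liminf (fun n => (Set.ncard (A ∩ ↑(F n)) : ℝ) / (F n).card) atTop} := by
  classical
  set f : ℤ × ℤ → ℤ := fun q => q.2 - q.1 with hfdef
  set g : ℤ × ℤ → ℝ :=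
    fun q : ℤ × ℤ => (Set.ncard (A ∩ Set.Icc q.1 q.2) : ℝ) / ((q.2 : ℝ) - q.1 + 1) with hgdef
  set S : Set ℝ := {x : ℝ | ∃ F : ℕ → Finset ℤ, IsFolnerSeq F ∧
      x = Filter.liminf (fun n => (Set.ncard (A ∩ ↑(F n)) : ℝ) / (F n).card) atTop} with hSdef
  set L : ℝ := Filter.liminf g (Filter.comap f atTop) with hLdef
  -- the comap filter is nontrivial
  have hsec : Tendsto (fun m : ℤ => ((0 : ℤ), m)) atTop (Filter.comap f atTop) := by
    rw [tendsto_comap_iff]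
    exact (tendsto_id (α := ℤ)).congr fun m => by simp [hfdef, Function.comp]
  haveI hNB : (Filter.comap f atTop).NeBot := neBot_of_le hsec
  -- basic eventually/frequently translation
  have hev_of : ∀ (M : ℤ) (p : ℤ × ℤ → Prop), (∀ q : ℤ × ℤ, M ≤ f q → p q) →
      ∀ᶠ q in Filter.comap f atTop, p q := fun M p h =>
    eventually_comap.mpr (eventually_atTop.mpr ⟨M, fun b hb q hq => h q (hq ▸ hb)⟩)
  have hof_ev : ∀ p : ℤ × ℤ → Prop, (∀ᶠ q in Filter.comap f atTop, p q) →
      ∃ M : ℤ, ∀ q : ℤ × ℤ, M ≤ f q → p q := by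
    intro p hp
    rw [eventually_comap, eventually_atTop] at hp
    obtain ⟨M, hM⟩ := hp
    exact ⟨M, fun q hq => hM (f q) hq q rfl⟩
  -- bounds on g
  have hgden : ∀ q : ℤ × ℤ, 0 ≤ f q → (0 : ℝ) < (q.2 : ℝ) - q.1 + 1 := by
    intro q hq
    simp only [hfdef] at hq
    have : (0 : ℝ) ≤ (q.2 : ℝ) - q.1 := by exact_mod_cast hq
    linarith
  have hgnum : ∀ q : ℤ × ℤ, 0 ≤ f q →
      (Set.ncard (A ∩ Set.Icc q.1 q.2) : ℝ) ≤ (q.2 : ℝ) - q.1 + 1 := by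
    intro q hq
    simp only [hfdef] at hq
    have h1 : Set.ncard (A ∩ Set.Icc q.1 q.2) ≤ (Finset.Icc q.1 q.2).card := by
      rw [← Set.ncard_coe_finset, Finset.coe_Icc]
      exact Set.ncard_le_ncard Set.inter_subset_right (Set.finite_Icc _ _)
    have h2 : ((Finset.Icc q.1 q.2).card : ℝ) = (q.2 : ℝ) - q.1 + 1 := by
      rw [Int.card_Icc]
      have h3 : ((q.2 + 1 - q.1).toNat : ℤ) = q.2 + 1 - q.1 := Int.toNat_of_nonneg (by omega)
      have h4 : ((q.2 + 1 - q.1).toNat : ℝ) = ((q.2 + 1 - q.1 : ℤ) : ℝ) := by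
        exact_mod_cast congrArg (Int.cast : ℤ → ℝ) h3
      rw [h4]; push_cast; ring
    calc (Set.ncard (A ∩ Set.Icc q.1 q.2) : ℝ) ≤ ((Finset.Icc q.1 q.2).card : ℝ) := by
          exact_mod_cast h1
      _ = _ := h2
  have hg0 : ∀ᶠ q in Filter.comap f atTop, 0 ≤ g q := by
    refine hev_of 0 _ fun q hq => ?_
    simp only [hgdef]
    exact div_nonneg (Nat.cast_nonneg _) (hgden q hq).le
  have hg1 : ∀ᶠ q in Filter.comap f atTop, g q ≤ 1 := by
    refine hev_of 0 _ fun q hq => ?_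
    simp only [hgdef]
    rw [div_le_one (hgden q hq)]
    exact hgnum q hq
  -- the set of eventual lower bounds
  set T : Set ℝ := {x : ℝ | ∀ᶠ q in Filter.comap f atTop, x ≤ g q} with hTdef
  have hLT : L = sSup T := Filter.liminf_eq
  have hTne : T.Nonempty := ⟨0, hg0⟩
  have hTbdd : BddAbove T := by
    refine ⟨1, fun x hx => ?_⟩
    have hx' : ∀ᶠ q in Filter.comap f atTop, x ≤ g q := hx
    obtain ⟨q, hq1, hq2⟩ := (hx'.and hg1).exists
    linarith
  -- Part I: L is a lower bound for S
  have hlow : ∀ x ∈ S, L ≤ x := by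
    rintro x ⟨F, hFol, rfl⟩
    obtain ⟨hFne, hFk⟩ := hFol
    have hcardpos : ∀ n, (0 : ℝ) < ((F n).card : ℝ) := fun n =>
      Nat.cast_pos.mpr (hFne n).card_pos
    have hu1 : ∀ n, (Set.ncard (A ∩ ↑(F n)) : ℝ) / ((F n).card : ℝ) ≤ 1 := by
      intro n
      rw [div_le_one (hcardpos n)]
      have : Set.ncard (A ∩ ↑(F n)) ≤ (F n).card := by
        rw [← Set.ncard_coe_finset]
        exact Set.ncard_le_ncard Set.inter_subset_right (F n).finite_toSet
      exact_mod_cast this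
    have hcob : IsCoboundedUnder (· ≥ ·) atTop
        (fun n => (Set.ncard (A ∩ ↑(F n)) : ℝ) / ((F n).card : ℝ)) :=
      (isBoundedUnder_of ⟨1, hu1⟩).isCoboundedUnder_ge
    refine le_of_forall_sub_le fun ε hε => ?_
    have hlt : L - ε / 2 < sSup T := by rw [← hLT]; linarith
    obtain ⟨a0, ha0T, ha0⟩ := exists_lt_of_lt_csSup hTne hlt
    have ha0T' : ∀ᶠ q in Filter.comap f atTop, a0 ≤ g q := ha0T
    have hev2 : ∀ᶠ q in Filter.comap f atTop, L - ε / 2 ≤ g q :=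
      ha0T'.mono fun q hq => le_trans ha0.le hq
    obtain ⟨M, hM⟩ := hof_ev _ hev2
    set ℓ : ℤ := max M 0 + 1 with hℓdef
    have hℓ1 : 1 ≤ ℓ := by
      have := le_max_right M 0; omega
    have hℓpos : (0 : ℝ) < (ℓ : ℝ) := by exact_mod_cast hℓ1.trans_lt' zero_lt_one
    have hint : ∀ x : ℤ, (L - ε / 2) * ℓ ≤ (Set.ncard (A ∩ Set.Icc (x + 1) (x + ℓ)) : ℝ) := by
      intro x
      have hq := hM (x + 1, x + ℓ) (by
        simp only [hfdef]
        have := le_max_left M 0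
        omega)
      simp only [hgdef] at hq
      have hden : ((x + ℓ : ℤ) : ℝ) - ((x + 1 : ℤ) : ℝ) + 1 = (ℓ : ℝ) := by push_cast; ring
      rw [hden] at hq
      exact (le_div_iff₀ hℓpos).mp hq
    have hper : ∀ n, L - ε / 2 ≤ (Set.ncard (A ∩ ↑(F n)) : ℝ) / ((F n).card : ℝ) +
        (∑ j ∈ Finset.Icc (1 : ℤ) ℓ,
          ((symmDiff (F n) ((F n).image (j + ·))).card : ℝ) / ((F n).card : ℝ)) / (ℓ : ℝ) :=
      fun n => main_ineq A (F n) (hcardpos n) ℓ hℓ1 _ hint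
    have hbt : Tendsto (fun n => (∑ j ∈ Finset.Icc (1 : ℤ) ℓ,
        ((symmDiff (F n) ((F n).image (j + ·))).card : ℝ) / ((F n).card : ℝ)) / (ℓ : ℝ))
        atTop (nhds 0) := by
      have hsum : Tendsto (fun n => ∑ j ∈ Finset.Icc (1 : ℤ) ℓ,
          ((symmDiff (F n) ((F n).image (j + ·))).card : ℝ) / ((F n).card : ℝ))
          atTop (nhds 0) := by
        have := tendsto_finset_sum (Finset.Icc (1 : ℤ) ℓ)
          (fun j (_ : j ∈ Finset.Icc (1 : ℤ) ℓ) => hFk j)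
        simpa using this
      simpa using hsum.div_const (ℓ : ℝ)
    have hevu : ∀ᶠ n in atTop, L - ε ≤
        (Set.ncard (A ∩ ↑(F n)) : ℝ) / ((F n).card : ℝ) := by
      filter_upwards [hbt.eventually_lt_const (show (0 : ℝ) < ε / 2 by linarith)] with n hn
      have := hper n
      linarith
    exact le_liminf_of_le hcob hevu
  -- Part II: a Følner sequence of intervals approaching L
  have hfreq : ∀ n : ℕ, ∃ q : ℤ × ℤ, (n : ℤ) ≤ f q ∧ g q < L + 1 / ((n : ℝ) + 1) := by
    intro n
    have hεpos : (0 : ℝ) < 1 / ((n : ℝ) + 1) := by positivity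
    have hnotin : ¬ ∀ᶠ q in Filter.comap f atTop, L + 1 / ((n : ℝ) + 1) ≤ g q := by
      intro hin
      have : L + 1 / ((n : ℝ) + 1) ≤ L := by
        rw [hLT]; exact le_csSup hTbdd hin
      linarith
    have hfr : ∃ᶠ q in Filter.comap f atTop, g q < L + 1 / ((n : ℝ) + 1) := by
      rw [Filter.not_eventually] at hnotin
      exact hnotin.mono fun q hq => lt_of_not_ge hq
    rw [frequently_comap] at hfr
    obtain ⟨b, hb, q, hq1, hq2⟩ := frequently_atTop.mp hfr (n : ℤ)
    exact ⟨q, hq1 ▸ hb, hq2⟩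
  choose q hq1 hq2 using hfreq
  have hq1' : ∀ n : ℕ, (n : ℤ) ≤ (q n).2 - (q n).1 := by
    intro n; have := hq1 n; simpa [hfdef] using this
  have hfol0 : IsFolnerSeq (fun n => Finset.Icc (q n).1 (q n).2) :=
    isFolner_Icc _ _ hq1'
  have hmem : Filter.liminf (fun n =>
      (Set.ncard (A ∩ ↑(Finset.Icc (q n).1 (q n).2)) : ℝ) /
        ((Finset.Icc (q n).1 (q n).2).card : ℝ)) atTop ∈ S :=
    ⟨_, hfol0, rfl⟩
  have hueq : ∀ n : ℕ, (Set.ncard (A ∩ ↑(Finset.Icc (q n).1 (q n).2)) : ℝ) /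
      ((Finset.Icc (q n).1 (q n).2).card : ℝ) = g (q n) := by
    intro n
    simp only [hgdef]
    rw [Finset.coe_Icc]
    congr 1
    rw [Int.card_Icc]
    have h3 : (((q n).2 + 1 - (q n).1).toNat : ℤ) = (q n).2 + 1 - (q n).1 :=
      Int.toNat_of_nonneg (by have := hq1' n; omega)
    have h4 : (((q n).2 + 1 - (q n).1).toNat : ℝ) = (((q n).2 + 1 - (q n).1 : ℤ) : ℝ) := by
      exact_mod_cast congrArg (Int.cast : ℤ → ℝ) h3
    rw [h4]; push_cast; ring
  have hle2 : ∀ n : ℕ, (Set.ncard (A ∩ ↑(Finset.Icc (q n).1 (q n).2)) : ℝ) /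
      ((Finset.Icc (q n).1 (q n).2).card : ℝ) ≤ L + 1 / ((n : ℝ) + 1) := by
    intro n
    rw [hueq n]
    exact (hq2 n).le
  have hbddB : IsBoundedUnder (· ≥ ·) atTop (fun n : ℕ =>
      (Set.ncard (A ∩ ↑(Finset.Icc (q n).1 (q n).2)) : ℝ) /
        ((Finset.Icc (q n).1 (q n).2).card : ℝ)) :=
    isBoundedUnder_of ⟨0, fun n => by positivity⟩
  have hcobv : IsCoboundedUnder (· ≥ ·) atTop
      (fun n : ℕ => L + 1 / ((n : ℝ) + 1)) := by
    refine (isBoundedUnder_of ⟨L + 1, fun n => ?_⟩).isCoboundedUnder_ge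
    have h5 : 1 / ((n : ℝ) + 1) ≤ 1 := by
      rw [div_le_one (by positivity)]
      have : (0 : ℝ) ≤ (n : ℝ) := Nat.cast_nonneg n
      linarith
    linarith
  have hvlim : Tendsto (fun n : ℕ => L + 1 / ((n : ℝ) + 1)) atTop (nhds L) := by
    have hc : Tendsto (fun _ : ℕ => L) atTop (nhds L) := tendsto_const_nhds
    simpa using hc.add tendsto_one_div_add_atTop_nhds_zero_nat
  have hx0le : Filter.liminf (fun n =>
      (Set.ncard (A ∩ ↑(Finset.Icc (q n).1 (q n).2)) : ℝ) /
        ((Finset.Icc (q n).1 (q n).2).card : ℝ)) atTop ≤ L := by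
    calc Filter.liminf (fun n =>
        (Set.ncard (A ∩ ↑(Finset.Icc (q n).1 (q n).2)) : ℝ) /
          ((Finset.Icc (q n).1 (q n).2).card : ℝ)) atTop
        ≤ Filter.liminf (fun n : ℕ => L + 1 / ((n : ℝ) + 1)) atTop :=
          Filter.liminf_le_liminf (Eventually.of_forall hle2) hbddB hcobv
      _ = L := hvlim.liminf_eq
  exact le_antisymm (le_csInf ⟨_, hmem⟩ hlow)
    ((csInf_le ⟨L, fun x hx => hlow x hx⟩ hmem).trans hx0le)
end

section
/- (Van der Corput lemma for amenable groups) Let Γ be a discrete amenable group with left Følner net (Φ_α)_{α∈A}, let H be a Hilbert space, and let {f_γ : γ ∈ Γ} ⊆ H with sup_γ ‖f_γ‖ < ∞. If lim_{α} (1/|Φ_α|²) · limsup_{β} (1/|Φ_β|) Σ_{γ∈Φ_β} Σ_{η,ρ∈Φ_α} ⟨f_{ηγ}, f_{ργ}⟩ = 0, then lim_α ‖(1/|Φ_α|) Σ_{γ∈Φ_α} f_γ‖ = 0. -/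
open Filter

/-- Difference of sums over two finsets is controlled by the symmetric difference. -/
lemma vdc_sum_sub_sum {G H : Type} [DecidableEq G] [NormedAddCommGroup H]
    (f : G → H) (C : ℝ) (hbd : ∀ γ, ‖f γ‖ ≤ C) (A B : Finset G) :
    ‖(∑ γ ∈ A, f γ) - ∑ γ ∈ B, f γ‖ ≤ C * ((symmDiff A B).card : ℝ) := by
  have hdisj : Disjoint (A \ B) (B \ A) := disjoint_sdiff_sdiff
  have h1 : (∑ γ ∈ A, f γ) - ∑ γ ∈ B, f γ
      = (∑ γ ∈ A \ B, f γ) - ∑ γ ∈ B \ A, f γ := by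
    rw [← Finset.sum_sdiff (Finset.inter_subset_left : A ∩ B ⊆ A),
        ← Finset.sum_sdiff (Finset.inter_subset_right : A ∩ B ⊆ B),
        Finset.sdiff_inter_self_left, Finset.sdiff_inter_self_right]
    abel
  have h2 : (symmDiff A B).card = (A \ B).card + (B \ A).card := by
    rw [symmDiff_def, Finset.sup_eq_union, Finset.card_union_of_disjoint hdisj]
  rw [h1, h2]
  calc ‖(∑ γ ∈ A \ B, f γ) - ∑ γ ∈ B \ A, f γ‖
      ≤ ‖∑ γ ∈ A \ B, f γ‖ + ‖∑ γ ∈ B \ A, f γ‖ := norm_sub_le _ _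
    _ ≤ (∑ γ ∈ A \ B, C) + ∑ γ ∈ B \ A, C := by
        gcongr
        · exact (norm_sum_le _ _).trans (Finset.sum_le_sum fun γ _ => hbd γ)
        · exact (norm_sum_le _ _).trans (Finset.sum_le_sum fun γ _ => hbd γ)
    _ = C * (((A \ B).card + (B \ A).card : ℕ) : ℝ) := by
        simp [Finset.sum_const, nsmul_eq_mul]
        ring

/-- Cauchy–Schwarz: the square of the norm of a sum is at most the cardinality times
the sum of squared norms. -/
lemma vdc_norm_sum_sq {G H : Type} [NormedAddCommGroup H]
    (s : Finset G) (w : G → H) :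
    ‖∑ γ ∈ s, w γ‖ ^ 2 ≤ (s.card : ℝ) * ∑ γ ∈ s, ‖w γ‖ ^ 2 := by
  have h1 : ‖∑ γ ∈ s, w γ‖ ^ 2 ≤ (∑ γ ∈ s, ‖w γ‖) ^ 2 := by
    have := norm_sum_le s w
    nlinarith [norm_nonneg (∑ γ ∈ s, w γ), Finset.sum_nonneg (fun γ (_ : γ ∈ s) => norm_nonneg (w γ))]
  refine h1.trans ?_
  have h2 := Finset.sum_mul_sq_le_sq_mul_sq s (fun _ => (1 : ℝ)) (fun γ => ‖w γ‖)
  simpa using h2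

/-- Expansion of the squared norm of a sum as a double sum of inner products. -/
lemma vdc_norm_sq_expand {G H : Type} [NormedAddCommGroup H] [InnerProductSpace ℝ H]
    (s : Finset G) (v : G → H) :
    ‖∑ η ∈ s, v η‖ ^ 2 = ∑ η ∈ s, ∑ ρ ∈ s, (inner ℝ (v η) (v ρ) : ℝ) := by
  rw [← real_inner_self_eq_norm_sq, sum_inner]
  exact Finset.sum_congr rfl fun η _ => inner_sum s v (v η)

/-- Van der Corput lemma for amenable groups: if the averaged correlations of a bounded
family `{f γ}` in a Hilbert space vanish along the Følner net, then the Følner averages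
of the `f γ` tend to `0` in norm. -/
theorem vanDerCorput_amenable {G ι H : Type} [Group G] [DecidableEq G]
    [Preorder ι] [IsDirected ι (· ≤ ·)] [Nonempty ι]
    [NormedAddCommGroup H] [InnerProductSpace ℝ H]
    (Φ : ι → Finset G) (hΦ : IsFolnerNet Φ)
    (f : G → H) (C : ℝ) (hbd : ∀ γ : G, ‖f γ‖ ≤ C)
    (hcorr : Tendsto
      (fun α => (1 / ((Φ α).card : ℝ) ^ 2) *
        Filter.limsup
          (fun β => (1 / ((Φ β).card : ℝ)) *
            ∑ γ ∈ Φ β, ∑ η ∈ Φ α, ∑ ρ ∈ Φ α, (inner ℝ (f (η * γ)) (f (ρ * γ)) : ℝ))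
          atTop)
      atTop (nhds 0)) :
    Tendsto (fun α => ‖(1 / ((Φ α).card : ℝ)) • ∑ γ ∈ Φ α, f γ‖) atTop (nhds 0) := by
  obtain ⟨hne, hfol⟩ := hΦ
  have hC0 : 0 ≤ C := (norm_nonneg _).trans (hbd 1)
  have hcard : ∀ β : ι, (0 : ℝ) < ((Φ β).card : ℝ) := fun β => by
    exact_mod_cast Finset.card_pos.mpr (hne β)
  have hinner : ∀ x y : G, (inner ℝ (f x) (f y) : ℝ) ≤ C ^ 2 := fun x y => by
    have := real_inner_le_norm (f x) (f y)
    nlinarith [hbd x, hbd y, norm_nonneg (f x), norm_nonneg (f y)]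
  rw [NormedAddCommGroup.tendsto_nhds_zero]
  intro ε hε
  have h8 : (0 : ℝ) < ε ^ 2 / 8 := by positivity
  -- choose α with small averaged correlations
  obtain ⟨α, hα⟩ := (Metric.tendsto_nhds.mp hcorr (ε ^ 2 / 8) h8).exists
  rw [Real.dist_0_eq_abs] at hα
  -- abbreviations
  set h : ι → ℝ := fun β => (1 / ((Φ β).card : ℝ)) *
      ∑ γ ∈ Φ β, ∑ η ∈ Φ α, ∑ ρ ∈ Φ α, (inner ℝ (f (η * γ)) (f (ρ * γ)) : ℝ) with hh
  -- uniform bound on h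
  have hbddh : ∀ β, h β ≤ ((Φ α).card : ℝ) ^ 2 * C ^ 2 := by
    intro β
    have hsum : ∑ γ ∈ Φ β, ∑ η ∈ Φ α, ∑ ρ ∈ Φ α, (inner ℝ (f (η * γ)) (f (ρ * γ)) : ℝ)
        ≤ ∑ γ ∈ Φ β, ∑ η ∈ Φ α, ∑ ρ ∈ Φ α, C ^ 2 :=
      Finset.sum_le_sum fun γ _ => Finset.sum_le_sum fun η _ =>
        Finset.sum_le_sum fun ρ _ => hinner _ _
    have hconst : ∑ γ ∈ Φ β, ∑ η ∈ Φ α, ∑ ρ ∈ Φ α, C ^ 2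
        = ((Φ β).card : ℝ) * (((Φ α).card : ℝ) * (((Φ α).card : ℝ) * C ^ 2)) := by
      simp [Finset.sum_const, nsmul_eq_mul]
    have hb := hcard β
    calc h β ≤ (1 / ((Φ β).card : ℝ)) *
          (((Φ β).card : ℝ) * (((Φ α).card : ℝ) * (((Φ α).card : ℝ) * C ^ 2))) := by
          rw [hh]
          dsimp only
          rw [← hconst]
          exact mul_le_mul_of_nonneg_left hsum (by positivity)
      _ = ((Φ α).card : ℝ) ^ 2 * C ^ 2 := by field_simp
  have hbound : IsBoundedUnder (· ≤ ·) atTop h :=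
    Filter.isBoundedUnder_of ⟨((Φ α).card : ℝ) ^ 2 * C ^ 2, hbddh⟩
  -- limsup bound
  have hL : limsup h atTop < ((Φ α).card : ℝ) ^ 2 * (ε ^ 2 / 8) := by
    have h1 : (1 / ((Φ α).card : ℝ) ^ 2) * limsup h atTop < ε ^ 2 / 8 := lt_of_abs_lt hα
    have h2 : (0 : ℝ) < ((Φ α).card : ℝ) ^ 2 := by positivity
    have key : ((Φ α).card : ℝ) ^ 2 * ((1 / ((Φ α).card : ℝ) ^ 2) * limsup h atTop)
        = limsup h atTop := by field_simp
    nlinarith [mul_lt_mul_of_pos_left h1 h2]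
  have hev1 : ∀ᶠ β in atTop, h β < ((Φ α).card : ℝ) ^ 2 * (ε ^ 2 / 8) :=
    eventually_lt_of_limsup_lt hL hbound
  -- Følner eventual smallness
  have hδ : (0 : ℝ) < ε / (2 * (C + 1)) := by positivity
  have hev2 : ∀ᶠ β in atTop, ∀ η ∈ Φ α,
      ((symmDiff (Φ β) ((Φ β).image (η * ·))).card : ℝ) / ((Φ β).card : ℝ)
        < ε / (2 * (C + 1)) := by
    rw [eventually_all_finset]
    intro η _
    exact (hfol η).eventually (gt_mem_nhds hδ)
  filter_upwards [hev1, hev2] with β h1 h2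
  show ‖‖(1 / ((Φ β).card : ℝ)) • ∑ γ ∈ Φ β, f γ‖‖ < ε
  rw [Real.norm_eq_abs, abs_of_nonneg (norm_nonneg _)]
  have hbβ := hcard β
  have hbα := hcard α
  set S : H := (1 / ((Φ β).card : ℝ)) • ∑ γ ∈ Φ β, f γ with hS
  set w : G → H := fun γ => (1 / ((Φ α).card : ℝ)) • ∑ η ∈ Φ α, f (η * γ) with hw
  set T : H := (1 / ((Φ β).card : ℝ)) • ∑ γ ∈ Φ β, w γ with hT
  -- Step 1 : ‖T‖² ≤ (1/|Φα|²) h β < ε²/8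
  have hwγ : ∀ γ : G, ‖w γ‖ ^ 2 = (1 / ((Φ α).card : ℝ) ^ 2) *
      ∑ η ∈ Φ α, ∑ ρ ∈ Φ α, (inner ℝ (f (η * γ)) (f (ρ * γ)) : ℝ) := by
    intro γ
    rw [hw]
    dsimp only
    rw [norm_smul, mul_pow, vdc_norm_sq_expand, Real.norm_eq_abs,
      abs_of_nonneg (by positivity), one_div_pow]
  have hT2 : ‖T‖ ^ 2 ≤ (1 / ((Φ α).card : ℝ) ^ 2) * h β := by
    have e2 : ‖T‖ ^ 2 ≤ (1 / ((Φ β).card : ℝ)) * ∑ γ ∈ Φ β, ‖w γ‖ ^ 2 := by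
      rw [hT, norm_smul, mul_pow, Real.norm_eq_abs, abs_of_nonneg (by positivity),
        one_div_pow]
      calc (1 / ((Φ β).card : ℝ) ^ 2) * ‖∑ γ ∈ Φ β, w γ‖ ^ 2
          ≤ (1 / ((Φ β).card : ℝ) ^ 2) * (((Φ β).card : ℝ) * ∑ γ ∈ Φ β, ‖w γ‖ ^ 2) :=
            mul_le_mul_of_nonneg_left (vdc_norm_sum_sq (Φ β) w) (by positivity)
        _ = (1 / ((Φ β).card : ℝ)) * ∑ γ ∈ Φ β, ‖w γ‖ ^ 2 := by field_simp
    refine e2.trans_eq ?_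
    rw [hh]
    dsimp only
    rw [Finset.sum_congr rfl fun γ _ => hwγ γ, ← Finset.mul_sum]
    ring
  have hT2' : ‖T‖ ^ 2 < ε ^ 2 / 8 := by
    refine hT2.trans_lt ?_
    have hpos : (0 : ℝ) < 1 / ((Φ α).card : ℝ) ^ 2 := by positivity
    calc (1 / ((Φ α).card : ℝ) ^ 2) * h β
        < (1 / ((Φ α).card : ℝ) ^ 2) * (((Φ α).card : ℝ) ^ 2 * (ε ^ 2 / 8)) :=
          mul_lt_mul_of_pos_left h1 hpos
      _ = ε ^ 2 / 8 := by field_simp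
  have hTlt : ‖T‖ < ε / 2 := by
    nlinarith [norm_nonneg T, hε]
  -- Step 2 : ‖S - T‖ < ε/2
  have hrw : S - T = (1 / ((Φ α).card : ℝ)) •
      ∑ η ∈ Φ α, (S - (1 / ((Φ β).card : ℝ)) • ∑ γ ∈ Φ β, f (η * γ)) := by
    rw [Finset.sum_sub_distrib, smul_sub]
    congr 1
    · rw [Finset.sum_const, ← Nat.cast_smul_eq_nsmul ℝ, smul_smul,
        show (1 / ((Φ α).card : ℝ)) * ((Φ α).card : ℝ) = 1 by field_simp, one_smul]
    · rw [hT, hw]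
      simp only [Finset.smul_sum, smul_smul]
      rw [Finset.sum_comm]
      simp [mul_comm]
  have hST : ‖S - T‖ ≤ (1 / ((Φ α).card : ℝ)) * ∑ η ∈ Φ α,
      (C * (((symmDiff (Φ β) ((Φ β).image (η * ·))).card : ℝ) / ((Φ β).card : ℝ))) := by
    rw [hrw, norm_smul, Real.norm_eq_abs, abs_of_nonneg (by positivity)]
    refine mul_le_mul_of_nonneg_left ?_ (by positivity)
    refine (norm_sum_le _ _).trans (Finset.sum_le_sum fun η _ => ?_)
    have hre : ∑ γ ∈ Φ β, f (η * γ) = ∑ γ ∈ (Φ β).image (η * ·), f γ :=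
      (Finset.sum_image fun a _ b _ hab => mul_left_cancel hab).symm
    rw [hS, hre, ← smul_sub, norm_smul, Real.norm_eq_abs, abs_of_nonneg (by positivity)]
    have hd := vdc_sum_sub_sum f C hbd (Φ β) ((Φ β).image (η * ·))
    calc (1 / ((Φ β).card : ℝ)) * ‖(∑ γ ∈ Φ β, f γ) - ∑ γ ∈ (Φ β).image (η * ·), f γ‖
        ≤ (1 / ((Φ β).card : ℝ)) *
          (C * ((symmDiff (Φ β) ((Φ β).image (η * ·))).card : ℝ)) :=
          mul_le_mul_of_nonneg_left hd (by positivity)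
      _ = C * (((symmDiff (Φ β) ((Φ β).image (η * ·))).card : ℝ) / ((Φ β).card : ℝ)) := by
          ring
  have herr : ‖S - T‖ < ε / 2 := by
    have hsum : ∑ η ∈ Φ α,
        (C * (((symmDiff (Φ β) ((Φ β).image (η * ·))).card : ℝ) / ((Φ β).card : ℝ)))
        ≤ ∑ _η ∈ Φ α, (C * (ε / (2 * (C + 1)))) :=
      Finset.sum_le_sum fun η hη =>
        mul_le_mul_of_nonneg_left (le_of_lt (h2 η hη)) hC0
    calc ‖S - T‖ ≤ (1 / ((Φ α).card : ℝ)) * ∑ η ∈ Φ α,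
          (C * (((symmDiff (Φ β) ((Φ β).image (η * ·))).card : ℝ) / ((Φ β).card : ℝ))) := hST
      _ ≤ (1 / ((Φ α).card : ℝ)) * (((Φ α).card : ℝ) * (C * (ε / (2 * (C + 1))))) := by
          refine mul_le_mul_of_nonneg_left ?_ (by positivity)
          refine hsum.trans_eq ?_
          simp [Finset.sum_const, nsmul_eq_mul]
      _ = C * (ε / (2 * (C + 1))) := by field_simp
      _ = (C * ε) / (2 * (C + 1)) := by ring
      _ < ε / 2 := by
          rw [div_lt_div_iff₀ (by positivity) (by norm_num)]
          nlinarith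
  calc ‖S‖ = ‖T + (S - T)‖ := by rw [add_sub_cancel]
    _ ≤ ‖T‖ + ‖S - T‖ := norm_add_le _ _
    _ < ε / 2 + ε / 2 := add_lt_add hTlt herr
    _ = ε := by ring
end

section
/- Every solvable group is uniformly amenable; moreover, subgroups, homomorphic images, and finite direct products of uniformly amenable groups are uniformly amenable. Concretely: if Γ is uniformly amenable with Følner function F and H ≤ Γ is a subgroup, then H is uniformly amenable (with a Følner function depending only on F). -/
/-- `G` is uniformly amenable with Følner function `F`: for every finite `Ψ ⊆ G` with
`|Ψ| ≤ n` and every `0 < ε < 1` there is a non-empty finite `Φ ⊆ G` with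
`|Φ| ≤ F n ε` and `|Φ ∆ γΦ| ≤ ε|Φ|` for all `γ ∈ Ψ`. -/
def IsUnifAmenableWith (G : Type) [Group G] [DecidableEq G] (F : ℕ → ℝ → ℕ) : Prop :=
  ∀ (Ψ : Finset G) (n : ℕ) (ε : ℝ), Ψ.card ≤ n → 0 < ε → ε < 1 →
    ∃ Φ : Finset G, Φ.Nonempty ∧ Φ.card ≤ F n ε ∧
      ∀ γ ∈ Ψ, ((symmDiff Φ (Φ.image (γ * ·))).card : ℝ) ≤ ε * Φ.card

/-- `G` is uniformly amenable. -/
def IsUnifAmenable (G : Type) [Group G] [DecidableEq G] : Prop :=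
  ∃ F : ℕ → ℝ → ℕ, IsUnifAmenableWith G F

open Finset
set_option linter.unusedSectionVars false
set_option maxHeartbeats 2000000

section Helpers
variable {G : Type*} [Group G] [DecidableEq G]
lemma card_image_mulLeft (γ : G) (Φ : Finset G) : (Φ.image (γ * ·)).card = Φ.card :=
  Finset.card_image_of_injective _ (mul_right_injective γ)

lemma card_symmDiff_eq (A B : Finset G) : (symmDiff A B).card = (A \ B).card + (B \ A).card := by
  rw [symmDiff_def]
  exact Finset.card_union_of_disjoint (disjoint_sdiff_sdiff)

lemma sdiff_subset_symmDiff (A B : Finset G) : B \ A ⊆ symmDiff A B := by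
  rw [symmDiff_def]; exact Finset.subset_union_right

lemma card_symmDiff_of_card_eq {A B : Finset G} (h : A.card = B.card) :
    (symmDiff A B).card = 2 * (B \ A).card := by
  have h1 : (A \ B).card + (A ∩ B).card = A.card := Finset.card_sdiff_add_card_inter A B
  have h2 : (B \ A).card + (B ∩ A).card = B.card := Finset.card_sdiff_add_card_inter B A
  rw [Finset.inter_comm] at h2
  rw [card_symmDiff_eq]; omega

-- pigeonhole
lemma exists_good_piece {ι : Type*} (I : Finset ι) (w : ι → ℕ) (c : ι → ℝ)
    (hc : ∀ i ∈ I, 0 ≤ c i) (ε : ℝ)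
    (hsum : ∑ i ∈ I, c i ≤ ε * ∑ i ∈ I, (w i : ℝ)) (hw : 0 < ∑ i ∈ I, w i) :
    ∃ i ∈ I, 0 < w i ∧ c i ≤ ε * w i := by
  by_contra hcon
  push_neg at hcon
  obtain ⟨i0, hi0, hwi0⟩ : ∃ i ∈ I, 0 < w i := by
    by_contra h; push_neg at h
    have : ∑ i ∈ I, w i = 0 := Finset.sum_eq_zero fun i hi => Nat.le_zero.mp (h i hi)
    omega
  have hlt : ε * ∑ i ∈ I, (w i : ℝ) < ∑ i ∈ I, c i := by
    rw [Finset.mul_sum]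
    refine Finset.sum_lt_sum (fun i hi => ?_) ⟨i0, hi0, hcon i0 hi0 hwi0⟩
    rcases Nat.eq_zero_or_pos (w i) with h0 | hp
    · simp [h0]; exact hc i hi
    · exact (hcon i hi hp).le
  linarith
end Helpers
section Push
variable {G K : Type*} [Group G] [DecidableEq G] [Group K] [DecidableEq K]

/-- fiber count -/
def fib (φ : G →* K) (S : Finset G) (k : K) : ℕ := (S.filter (fun x => φ x = k)).card

lemma fib_le_card (φ : G →* K) (S : Finset G) (k : K) : fib φ S k ≤ S.card :=
  Finset.card_filter_le _ _

lemma sum_fib (φ : G →* K) (S : Finset G) (D : Finset K) (h : ∀ x ∈ S, φ x ∈ D) :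
    ∑ k ∈ D, fib φ S k = S.card :=
  (Finset.card_eq_sum_card_fiberwise h).symm

lemma pos_fib_mem (φ : G →* K) (S : Finset G) (k : K) (h : 0 < fib φ S k) :
    k ∈ S.image φ := by
  obtain ⟨x, hx⟩ := Finset.card_pos.mp h
  simp only [mem_filter] at hx
  exact Finset.mem_image.mpr ⟨x, hx.1, hx.2⟩

lemma fib_translate (φ : G →* K) (Φ : Finset G) (γ : G) (k : K) :
    fib φ (Φ.image (γ * ·)) k = fib φ Φ ((φ γ)⁻¹ * k) := by
  unfold fib
  rw [← Finset.card_image_of_injective (Φ.filter fun x => φ x = (φ γ)⁻¹ * k) (mul_right_injective γ)]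
  congr 1
  ext y
  simp only [mem_filter, mem_image]
  constructor
  · rintro ⟨⟨x, hx, rfl⟩, hk⟩
    exact ⟨x, ⟨hx, by rw [← hk]; simp [mul_assoc]⟩, rfl⟩
  · rintro ⟨x, ⟨hx, hk⟩, rfl⟩
    exact ⟨⟨x, hx, rfl⟩, by rw [map_mul, hk]; simp⟩

lemma fib_subadd (φ : G →* K) (S T : Finset G) (k : K) :
    fib φ S k ≤ fib φ T k + fib φ (symmDiff S T) k := by
  have hsub : S ⊆ T ∪ symmDiff S T := by
    intro x hx
    by_cases hxT : x ∈ T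
    · exact Finset.mem_union_left _ hxT
    · exact Finset.mem_union_right _ (mem_symmDiff.mpr (Or.inl ⟨hx, hxT⟩))
  calc fib φ S k ≤ fib φ (T ∪ symmDiff S T) k :=
        Finset.card_le_card (Finset.filter_subset_filter _ hsub)
    _ ≤ fib φ T k + fib φ (symmDiff S T) k := by
        unfold fib; rw [Finset.filter_union]; exact Finset.card_union_le _ _

lemma sum_card_filter_comm {α β : Type*} (s : Finset α) (u : Finset β) (P : α → β → Prop)
    [∀ a b, Decidable (P a b)] :
    ∑ a ∈ s, (u.filter (P a)).card = ∑ b ∈ u, (s.filter (fun a => P a b)).card := by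
  simp only [Finset.card_filter]
  exact Finset.sum_comm

/-- the level set of the fiber-count function -/
def levelSet (φ : G →* K) (Φ : Finset G) (t : ℕ) : Finset K :=
  (Φ.image φ).filter (fun k => t ≤ fib φ Φ k)

lemma levelSet_card_le (φ : G →* K) (Φ : Finset G) (t : ℕ) :
    (levelSet φ Φ t).card ≤ Φ.card :=
  le_trans (Finset.card_filter_le _ _) Finset.card_image_le

lemma sum_levelSet_card (φ : G →* K) (Φ : Finset G) :
    ∑ t ∈ Icc 1 Φ.card, (levelSet φ Φ t).card = Φ.card := by
  unfold levelSet
  rw [sum_card_filter_comm]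
  have h : ∀ k ∈ Φ.image φ,
      ((Icc 1 Φ.card).filter (fun t => t ≤ fib φ Φ k)).card = fib φ Φ k := by
    intro k _
    have hle := fib_le_card φ Φ k
    have h2 : (Icc 1 Φ.card).filter (fun t => t ≤ fib φ Φ k) = Icc 1 (fib φ Φ k) := by
      ext t; simp only [mem_filter, mem_Icc]; omega
    rw [h2, Nat.card_Icc]; omega
  rw [Finset.sum_congr rfl h]
  exact sum_fib φ Φ (Φ.image φ) (fun x hx => Finset.mem_image_of_mem φ hx)

lemma levelSet_eq_filter (φ : G →* K) (Φ : Finset G) (t : ℕ) (ht : 1 ≤ t)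
    (E : Finset K) (hE : Φ.image φ ⊆ E) :
    levelSet φ Φ t = E.filter (fun k => t ≤ fib φ Φ k) := by
  ext k
  simp only [levelSet, mem_filter]
  constructor
  · rintro ⟨hk, h⟩; exact ⟨hE hk, h⟩
  · rintro ⟨_, h⟩; exact ⟨pos_fib_mem φ Φ k (by omega), h⟩

lemma levelSet_image (φ : G →* K) (Φ : Finset G) (γ : G) (t : ℕ) :
    (levelSet φ Φ t).image (φ γ * ·) = levelSet φ (Φ.image (γ * ·)) t := by
  ext k
  simp only [levelSet, mem_image, mem_filter]
  constructor
  · rintro ⟨k', ⟨⟨x, hx, rfl⟩, h⟩, rfl⟩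
    refine ⟨⟨γ * x, ⟨x, hx, rfl⟩, by rw [map_mul]⟩, ?_⟩
    rw [fib_translate]
    simpa using h
  · rintro ⟨⟨y, ⟨x, hx, rfl⟩, rfl⟩, h⟩
    rw [fib_translate] at h
    refine ⟨φ x, ⟨⟨x, hx, rfl⟩, ?_⟩, by rw [map_mul]⟩
    simpa [mul_assoc] using h

lemma count_xor (a b M : ℕ) (ha : a ≤ M) (hb : b ≤ M) :
    ((Icc 1 M).filter (fun t => ¬((t ≤ a) ↔ (t ≤ b)))).card ≤ (a - b) + (b - a) := by
  have hsub : (Icc 1 M).filter (fun t => ¬((t ≤ a) ↔ (t ≤ b))) ⊆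
      Ioc (min a b) (max a b) := by
    intro t ht
    simp only [mem_filter, mem_Icc] at ht
    simp only [mem_Ioc]
    omega
  calc _ ≤ (Ioc (min a b) (max a b)).card := Finset.card_le_card hsub
    _ = max a b - min a b := Nat.card_Ioc _ _
    _ ≤ (a - b) + (b - a) := by omega

/-- the layer cake estimate -/
lemma layer_cake (φ : G →* K) (Φ : Finset G) (γ : G) :
    ∑ t ∈ Icc 1 Φ.card, (symmDiff (levelSet φ Φ t) ((levelSet φ Φ t).image (φ γ * ·))).card
      ≤ (symmDiff Φ (Φ.image (γ * ·))).card := by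
  set T := Φ.image (γ * ·) with hT
  set E := Φ.image φ ∪ T.image φ with hE
  have hTcard : T.card = Φ.card := by
    rw [hT]; exact Finset.card_image_of_injective _ (mul_right_injective γ)
  have key : ∀ t ∈ Icc 1 Φ.card,
      (symmDiff (levelSet φ Φ t) ((levelSet φ Φ t).image (φ γ * ·))).card =
      (E.filter (fun k => ¬((t ≤ fib φ Φ k) ↔ (t ≤ fib φ T k)))).card := by
    intro t ht
    simp only [mem_Icc] at ht
    rw [levelSet_image]
    rw [levelSet_eq_filter φ Φ t ht.1 E Finset.subset_union_left,
        levelSet_eq_filter φ T t ht.1 E Finset.subset_union_right]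
    congr 1
    ext k
    simp only [Finset.mem_symmDiff, mem_filter]
    tauto
  rw [Finset.sum_congr rfl key, sum_card_filter_comm]
  have hbound : ∀ k ∈ E,
      ((Icc 1 Φ.card).filter (fun t => ¬((t ≤ fib φ Φ k) ↔ (t ≤ fib φ T k)))).card
      ≤ fib φ (symmDiff Φ T) k := by
    intro k _
    have h1 := fib_subadd φ Φ T k
    have h2 := fib_subadd φ T Φ k
    rw [symmDiff_comm] at h2
    have h3 := count_xor (fib φ Φ k) (fib φ T k) Φ.card (fib_le_card φ Φ k)
      (hTcard ▸ fib_le_card φ T k)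
    omega
  calc _ ≤ ∑ k ∈ E, fib φ (symmDiff Φ T) k := Finset.sum_le_sum hbound
    _ = (symmDiff Φ T).card := by
        apply sum_fib
        intro x hx
        rcases mem_symmDiff.mp hx with ⟨h, _⟩ | ⟨h, _⟩
        · exact Finset.mem_union_left _ (Finset.mem_image_of_mem φ h)
        · exact Finset.mem_union_right _ (Finset.mem_image_of_mem φ h)

lemma pushforward (φ : G →* K) (Φ : Finset G) (hΦ : Φ.Nonempty) (Ψ : Finset G) (ε : ℝ)
    (h : ∑ γ ∈ Ψ, ((symmDiff Φ (Φ.image (γ * ·))).card : ℝ) ≤ ε * Φ.card) :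
    ∃ Φ' : Finset K, Φ'.Nonempty ∧ Φ'.card ≤ Φ.card ∧
      ∑ γ ∈ Ψ, ((symmDiff Φ' (Φ'.image (φ γ * ·))).card : ℝ) ≤ ε * Φ'.card := by
  set M := Φ.card with hM
  set w : ℕ → ℕ := fun t => (levelSet φ Φ t).card with hw
  set c : ℕ → ℝ := fun t =>
    ∑ γ ∈ Ψ, ((symmDiff (levelSet φ Φ t) ((levelSet φ Φ t).image (φ γ * ·))).card : ℝ) with hc
  have hwsum : ∑ t ∈ Icc 1 M, w t = M := sum_levelSet_card φ Φ
  have hsum : ∑ t ∈ Icc 1 M, c t ≤ ε * ∑ t ∈ Icc 1 M, (w t : ℝ) := by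
    have hw' : ∑ t ∈ Icc 1 M, (w t : ℝ) = (M : ℝ) := by
      rw [← Nat.cast_sum, hwsum]
    rw [hw', hc]
    rw [Finset.sum_comm]
    refine le_trans (Finset.sum_le_sum (fun γ _ => ?_)) h
    have := layer_cake φ Φ γ
    calc ∑ t ∈ Icc 1 M,
          ((symmDiff (levelSet φ Φ t) ((levelSet φ Φ t).image (φ γ * ·))).card : ℝ)
        = ((∑ t ∈ Icc 1 M,
            (symmDiff (levelSet φ Φ t) ((levelSet φ Φ t).image (φ γ * ·))).card : ℕ) : ℝ) := by
          rw [Nat.cast_sum]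
      _ ≤ _ := by exact_mod_cast this
  have hwpos : 0 < ∑ t ∈ Icc 1 M, w t := by
    rw [hwsum]; exact Finset.card_pos.mpr hΦ
  obtain ⟨t, _, hwt, hct⟩ := exists_good_piece (Icc 1 M) w c
    (fun i _ => Finset.sum_nonneg (fun γ _ => Nat.cast_nonneg _)) ε hsum hwpos
  exact ⟨levelSet φ Φ t, Finset.card_pos.mp hwt, levelSet_card_le _ _ _, hct⟩

end Push

section EpsAux
lemma eps_div_pos {n : ℕ} {ε : ℝ} (hε0 : 0 < ε) : 0 < ε / (n + 1) :=
  div_pos hε0 (by positivity)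

lemma eps_div_lt_one {n : ℕ} {ε : ℝ} (hε0 : 0 < ε) (hε1 : ε < 1) : ε / (n + 1) < 1 :=
  lt_of_le_of_lt (div_le_self hε0.le (by exact_mod_cast Nat.le_add_left 1 n : (1:ℝ) ≤ n + 1)) hε1

lemma n_mul_eps_div_le {n : ℕ} {ε : ℝ} (hε0 : 0 < ε) : (n : ℝ) * (ε / (n + 1)) ≤ ε := by
  rw [mul_div_assoc']
  rw [div_le_iff₀ (by positivity : (0:ℝ) < (n:ℝ) + 1)]
  nlinarith [Nat.cast_nonneg (α := ℝ) n]
end EpsAux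

section QuotClosure
variable {G K : Type} [Group G] [DecidableEq G] [Group K] [DecidableEq K]

lemma quotient_closure (F : ℕ → ℝ → ℕ) (hG : IsUnifAmenableWith G F) (φ : G →* K)
    (hs : Function.Surjective φ) :
    IsUnifAmenableWith K (fun n ε => F n (ε / (n + 1))) := by
  intro Ψ n ε hn hε0 hε1
  set ε' := ε / (n + 1) with hε'
  set s := Function.surjInv hs with hsdef
  set Ψ' := Ψ.image s with hΨ'def
  have hΨ' : Ψ'.card ≤ n := le_trans Finset.card_image_le hn
  obtain ⟨Φ, hne, hcard, hbd⟩ := hG Ψ' n ε' hΨ' (eps_div_pos hε0) (eps_div_lt_one hε0 hε1)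
  have hsum : ∑ γ ∈ Ψ', ((symmDiff Φ (Φ.image (γ * ·))).card : ℝ)
      ≤ ((n : ℝ) * ε') * Φ.card := by
    calc ∑ γ ∈ Ψ', ((symmDiff Φ (Φ.image (γ * ·))).card : ℝ)
        ≤ ∑ _γ ∈ Ψ', ε' * Φ.card := Finset.sum_le_sum (fun γ hγ => hbd γ hγ)
      _ = (Ψ'.card : ℝ) * (ε' * Φ.card) := by rw [Finset.sum_const, nsmul_eq_mul]
      _ ≤ ((n : ℝ) * ε') * Φ.card := by
          rw [← mul_assoc]
          have h1 : (Ψ'.card : ℝ) ≤ (n : ℝ) := by exact_mod_cast hΨ'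
          have h2 : (0:ℝ) ≤ ε' * Φ.card := by positivity
          nlinarith
  obtain ⟨Φ', hne', hcard', hbd'⟩ := pushforward φ Φ hne Ψ' ((n : ℝ) * ε') hsum
  refine ⟨Φ', hne', le_trans hcard' hcard, fun k hk => ?_⟩
  have hks : s k ∈ Ψ' := Finset.mem_image_of_mem s hk
  have hterm : ((symmDiff Φ' (Φ'.image (φ (s k) * ·))).card : ℝ)
      ≤ ∑ γ ∈ Ψ', ((symmDiff Φ' (Φ'.image (φ γ * ·))).card : ℝ) :=
    Finset.single_le_sum (f := fun γ => ((symmDiff Φ' (Φ'.image (φ γ * ·))).card : ℝ))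
      (fun γ _ => Nat.cast_nonneg _) hks
  rw [Function.surjInv_eq hs k] at hterm
  calc ((symmDiff Φ' (Φ'.image (k * ·))).card : ℝ)
      ≤ ((n : ℝ) * ε') * Φ'.card := le_trans hterm hbd'
    _ ≤ ε * Φ'.card :=
        mul_le_mul_of_nonneg_right (n_mul_eps_div_le hε0) (Nat.cast_nonneg _)
end QuotClosure

section SubClosure
variable {G : Type} [Group G] [DecidableEq G]

lemma filter_symmDiff (A B : Finset G) (p : G → Prop) [DecidablePred p] :
    (symmDiff A B).filter p = symmDiff (A.filter p) (B.filter p) := by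
  ext x
  simp only [Finset.mem_symmDiff, mem_filter]
  tauto

lemma subgroup_closure (F : ℕ → ℝ → ℕ) (hG : IsUnifAmenableWith G F) (H : Subgroup G) :
    IsUnifAmenableWith H (fun n ε => F n (ε / (n + 1))) := by
  classical
  intro Ψ n ε hn hε0 hε1
  set ε' := ε / (n + 1) with hε'def
  set Ψ' := Ψ.image ((↑) : H → G) with hΨ'def
  have hΨ' : Ψ'.card ≤ n := le_trans Finset.card_image_le hn
  obtain ⟨Φ, hne, hcard, hbd⟩ := hG Ψ' n ε' hΨ' (eps_div_pos hε0) (eps_div_lt_one hε0 hε1)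
  letI : DecidableEq (G ⧸ H) := Classical.decEq _
  set q : G → G ⧸ H := fun x => QuotientGroup.mk x⁻¹ with hqdef
  have hq : ∀ γ ∈ H, ∀ x : G, q (γ * x) = q x := by
    intro γ hγ x
    show QuotientGroup.mk (γ * x)⁻¹ = QuotientGroup.mk x⁻¹
    rw [QuotientGroup.eq]
    simpa [mul_assoc] using hγ
  set I := Φ.image q with hIdef
  set piece : G ⧸ H → Finset G := fun k => Φ.filter (fun x => q x = k) with hpdef
  -- images of pieces
  have himg : ∀ γ ∈ Ψ', ∀ k, (Φ.image (γ * ·)).filter (fun x => q x = k)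
      = (piece k).image (γ * ·) := by
    intro γ hγ k
    obtain ⟨γ₀, _, rfl⟩ := Finset.mem_image.mp hγ
    ext y
    simp only [hpdef, mem_filter, mem_image]
    constructor
    · rintro ⟨⟨x, hx, rfl⟩, hk⟩
      exact ⟨x, ⟨hx, by rw [← hk, hq _ γ₀.2]⟩, rfl⟩
    · rintro ⟨x, ⟨hx, hk⟩, rfl⟩
      exact ⟨⟨x, hx, rfl⟩, by rw [hq _ γ₀.2, hk]⟩
  -- fiberwise sums
  have hwsum : ∑ k ∈ I, (piece k).card = Φ.card :=
    (Finset.card_eq_sum_card_fiberwise (fun x hx => Finset.mem_image_of_mem q hx)).symm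
  have hcsum : ∀ γ ∈ Ψ', ∑ k ∈ I, (symmDiff (piece k) ((piece k).image (γ * ·))).card
      = (symmDiff Φ (Φ.image (γ * ·))).card := by
    intro γ hγ
    obtain ⟨γ₀, _, hγ₀⟩ := Finset.mem_image.mp hγ
    have hmem : ∀ x ∈ symmDiff Φ (Φ.image (γ * ·)), q x ∈ I := by
      intro x hx
      rcases Finset.mem_symmDiff.mp hx with ⟨h, _⟩ | ⟨h, _⟩
      · exact Finset.mem_image_of_mem q h
      · obtain ⟨y, hy, rfl⟩ := Finset.mem_image.mp h
        rw [← hγ₀, hq _ γ₀.2]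
        exact Finset.mem_image_of_mem q hy
    rw [Finset.card_eq_sum_card_fiberwise hmem]
    refine Finset.sum_congr rfl (fun k _ => ?_)
    rw [filter_symmDiff, himg γ hγ k]
  -- pigeonhole
  set c : G ⧸ H → ℝ := fun k =>
    ∑ γ ∈ Ψ', ((symmDiff (piece k) ((piece k).image (γ * ·))).card : ℝ) with hcdef
  have htot : ∑ k ∈ I, c k ≤ ((n : ℝ) * ε') * ∑ k ∈ I, ((piece k).card : ℝ) := by
    rw [Finset.sum_comm]
    have : ∑ k ∈ I, ((piece k).card : ℝ) = (Φ.card : ℝ) := by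
      rw [← Nat.cast_sum, hwsum]
    rw [this]
    calc ∑ γ ∈ Ψ', ∑ k ∈ I, ((symmDiff (piece k) ((piece k).image (γ * ·))).card : ℝ)
        = ∑ γ ∈ Ψ', ((symmDiff Φ (Φ.image (γ * ·))).card : ℝ) := by
          refine Finset.sum_congr rfl (fun γ hγ => ?_)
          rw [← Nat.cast_sum, hcsum γ hγ]
      _ ≤ ∑ _γ ∈ Ψ', ε' * Φ.card := Finset.sum_le_sum (fun γ hγ => hbd γ hγ)
      _ = (Ψ'.card : ℝ) * (ε' * Φ.card) := by rw [Finset.sum_const, nsmul_eq_mul]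
      _ ≤ ((n : ℝ) * ε') * Φ.card := by
          rw [← mul_assoc]
          have h1 : (Ψ'.card : ℝ) ≤ (n : ℝ) := by exact_mod_cast hΨ'
          have h2 : (0:ℝ) ≤ ε' * Φ.card := by positivity
          nlinarith
  have hwpos : 0 < ∑ k ∈ I, (piece k).card := by
    rw [hwsum]; exact Finset.card_pos.mpr hne
  obtain ⟨k, _, hwk, hck⟩ := exists_good_piece I (fun k => (piece k).card) c
    (fun i _ => Finset.sum_nonneg (fun γ _ => Nat.cast_nonneg _)) ((n : ℝ) * ε') htot hwpos
  -- translate the piece into H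
  obtain ⟨x₀, hx₀⟩ := Finset.card_pos.mp hwk
  have hqx₀ : q x₀ = k := (Finset.mem_filter.mp hx₀).2
  have hmemH : ∀ y ∈ piece k, y * x₀⁻¹ ∈ H := by
    intro y hy
    have hqy : q y = k := (Finset.mem_filter.mp hy).2
    have hq' : q y = q x₀ := by rw [hqy, hqx₀]
    have h2 : (y⁻¹)⁻¹ * x₀⁻¹ ∈ H := QuotientGroup.eq.mp hq'
    simpa using h2
  set Φ'' : Finset G := (piece k).image (· * x₀⁻¹) with hΦ''def
  set ΦH : Finset H := Φ''.subtype (· ∈ H) with hΦHdef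
  have hcoe : ΦH.image ((↑) : H → G) = Φ'' := by
    ext x
    simp only [hΦHdef, mem_image]
    constructor
    · rintro ⟨a, ha, rfl⟩
      exact (Finset.mem_subtype.mp ha)
    · intro hx
      have hxH : x ∈ H := by
        obtain ⟨y, hy, rfl⟩ := Finset.mem_image.mp hx
        exact hmemH y hy
      exact ⟨⟨x, hxH⟩, Finset.mem_subtype.mpr hx, rfl⟩
  have hcardΦ'' : Φ''.card = (piece k).card :=
    Finset.card_image_of_injective _ (mul_left_injective x₀⁻¹)
  have hcardΦH : ΦH.card = (piece k).card := by
    rw [← hcardΦ'', ← hcoe]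
    exact (Finset.card_image_of_injective _ Subtype.coe_injective).symm
  refine ⟨ΦH, ?_, ?_, ?_⟩
  · rw [← Finset.card_pos, hcardΦH]; exact hwk
  · rw [hcardΦH]
    exact le_trans (le_trans (Finset.card_filter_le _ _) hcard) le_rfl
  · intro γ hγ
    have hγΨ' : (γ : G) ∈ Ψ' := Finset.mem_image_of_mem _ hγ
    -- reduce symmDiff in H to symmDiff of the piece
    have himgcoe : (ΦH.image (γ * ·)).image ((↑) : H → G) = Φ''.image ((γ : G) * ·) := by
      rw [Finset.image_image, ← hcoe, Finset.image_image]
      rfl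
    have hcards : (symmDiff ΦH (ΦH.image (γ * ·))).card
        = (symmDiff Φ'' (Φ''.image ((γ : G) * ·))).card := by
      have h1 := Finset.image_symmDiff ΦH (ΦH.image (γ * ·))
        (Subtype.coe_injective (p := (· ∈ H)))
      calc (symmDiff ΦH (ΦH.image (γ * ·))).card
          = ((symmDiff ΦH (ΦH.image (γ * ·))).image Subtype.val).card :=
            (Finset.card_image_of_injective _ Subtype.coe_injective).symm
        _ = (symmDiff (ΦH.image Subtype.val) ((ΦH.image (γ * ·)).image Subtype.val)).card := by
            rw [h1]
        _ = _ := by rw [himgcoe, hcoe]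
    have himgcomm : Φ''.image ((γ : G) * ·) = ((piece k).image ((γ : G) * ·)).image (· * x₀⁻¹) := by
      rw [hΦ''def, Finset.image_image, Finset.image_image]
      congr 1
      funext y
      show γ * (y * x₀⁻¹) = (γ * y) * x₀⁻¹
      rw [mul_assoc]
    have hcards2 : (symmDiff Φ'' (Φ''.image ((γ : G) * ·))).card
        = (symmDiff (piece k) ((piece k).image ((γ : G) * ·))).card := by
      rw [hΦ''def, himgcomm, ← Finset.image_symmDiff _ _ (mul_left_injective x₀⁻¹)]
      exact Finset.card_image_of_injective _ (mul_left_injective x₀⁻¹)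
    have hterm : ((symmDiff (piece k) ((piece k).image ((γ : G) * ·))).card : ℝ)
        ≤ c k :=
      Finset.single_le_sum
        (f := fun γ' : G => ((symmDiff (piece k) ((piece k).image (γ' * ·))).card : ℝ))
        (fun γ' _ => Nat.cast_nonneg _) hγΨ'
    rw [hcards, hcards2, hcardΦH]
    calc ((symmDiff (piece k) ((piece k).image ((γ : G) * ·))).card : ℝ)
        ≤ ((n : ℝ) * ε') * (piece k).card := le_trans hterm hck
      _ ≤ ε * (piece k).card :=
          mul_le_mul_of_nonneg_right (n_mul_eps_div_le hε0) (Nat.cast_nonneg _)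
end SubClosure

section ProdClosure
variable {G K : Type} [Group G] [DecidableEq G] [Group K] [DecidableEq K]

lemma prod_closure (hG : IsUnifAmenable G) (hK : IsUnifAmenable K) :
    IsUnifAmenable (G × K) := by
  obtain ⟨F1, h1⟩ := hG
  obtain ⟨F2, h2⟩ := hK
  refine ⟨fun n ε => F1 n (ε / 4) * F2 n (ε / 4), ?_⟩
  intro Ψ n ε hn hε0 hε1
  have h4 : 0 < ε / 4 := by linarith
  have h4' : ε / 4 < 1 := by linarith
  obtain ⟨Φ1, hne1, hc1, hb1⟩ := h1 (Ψ.image Prod.fst) n (ε / 4)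
    (le_trans Finset.card_image_le hn) h4 h4'
  obtain ⟨Φ2, hne2, hc2, hb2⟩ := h2 (Ψ.image Prod.snd) n (ε / 4)
    (le_trans Finset.card_image_le hn) h4 h4'
  refine ⟨Φ1 ×ˢ Φ2, hne1.product hne2, ?_, ?_⟩
  · rw [Finset.card_product]; exact Nat.mul_le_mul hc1 hc2
  rintro ⟨g, k⟩ hγ
  have hg := hb1 g (Finset.mem_image_of_mem Prod.fst hγ)
  have hk := hb2 k (Finset.mem_image_of_mem Prod.snd hγ)
  set A' := Φ1.image (g * ·) with hA'
  set B' := Φ2.image (k * ·) with hB'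
  have himg : (Φ1 ×ˢ Φ2).image ((g, k) * ·) = A' ×ˢ B' := by
    ext ⟨a, b⟩
    constructor
    · intro h
      obtain ⟨⟨x, y⟩, hxy, hab⟩ := Finset.mem_image.mp h
      obtain ⟨hx, hy⟩ := Finset.mem_product.mp hxy
      rw [Prod.mk_mul_mk] at hab
      obtain ⟨ha, hb⟩ := Prod.mk.injEq _ _ _ _ ▸ hab
      exact Finset.mem_product.mpr
        ⟨Finset.mem_image.mpr ⟨x, hx, ha⟩, Finset.mem_image.mpr ⟨y, hy, hb⟩⟩
    · intro h
      obtain ⟨ha, hb⟩ := Finset.mem_product.mp h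
      obtain ⟨x, hx, rfl⟩ := Finset.mem_image.mp ha
      obtain ⟨y, hy, rfl⟩ := Finset.mem_image.mp hb
      exact Finset.mem_image.mpr ⟨(x, y), Finset.mem_product.mpr ⟨hx, hy⟩, rfl⟩
  have hsub : symmDiff (Φ1 ×ˢ Φ2) (A' ×ˢ B') ⊆
      (symmDiff Φ1 A') ×ˢ (Φ2 ∪ B') ∪ (Φ1 ∩ A') ×ˢ (symmDiff Φ2 B') := by
    rintro ⟨a, b⟩ h
    rw [Finset.mem_symmDiff] at h
    simp only [Finset.mem_product] at h
    simp only [Finset.mem_union, Finset.mem_product, Finset.mem_symmDiff, Finset.mem_inter,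
      Finset.mem_union]
    tauto
  have hcardA' : A'.card = Φ1.card := Finset.card_image_of_injective _ (mul_right_injective g)
  have hcardB' : B'.card = Φ2.card := Finset.card_image_of_injective _ (mul_right_injective k)
  have hnat : (symmDiff (Φ1 ×ˢ Φ2) (A' ×ˢ B')).card ≤
      (symmDiff Φ1 A').card * (2 * Φ2.card) + Φ1.card * (symmDiff Φ2 B').card := by
    calc (symmDiff (Φ1 ×ˢ Φ2) (A' ×ˢ B')).card
        ≤ ((symmDiff Φ1 A') ×ˢ (Φ2 ∪ B') ∪ (Φ1 ∩ A') ×ˢ (symmDiff Φ2 B')).card :=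
          Finset.card_le_card hsub
      _ ≤ ((symmDiff Φ1 A') ×ˢ (Φ2 ∪ B')).card + ((Φ1 ∩ A') ×ˢ (symmDiff Φ2 B')).card :=
          Finset.card_union_le _ _
      _ ≤ (symmDiff Φ1 A').card * (2 * Φ2.card) + Φ1.card * (symmDiff Φ2 B').card := by
          rw [Finset.card_product, Finset.card_product]
          have hu : (Φ2 ∪ B').card ≤ 2 * Φ2.card := by
            calc (Φ2 ∪ B').card ≤ Φ2.card + B'.card := Finset.card_union_le _ _
              _ = 2 * Φ2.card := by rw [hcardB']; ring
          have hi : (Φ1 ∩ A').card ≤ Φ1.card := Finset.card_le_card Finset.inter_subset_left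
          exact Nat.add_le_add (Nat.mul_le_mul_left _ hu) (Nat.mul_le_mul_right _ hi)
  rw [himg]
  rw [Finset.card_product]
  have hcast : ((symmDiff (Φ1 ×ˢ Φ2) (A' ×ˢ B')).card : ℝ) ≤
      ((symmDiff Φ1 A').card : ℝ) * (2 * Φ2.card) + (Φ1.card : ℝ) * (symmDiff Φ2 B').card := by
    exact_mod_cast hnat
  push_cast
  nlinarith [Nat.cast_nonneg (α := ℝ) Φ1.card, Nat.cast_nonneg (α := ℝ) Φ2.card,
    Nat.cast_nonneg (α := ℝ) (symmDiff Φ1 A').card, Nat.cast_nonneg (α := ℝ) (symmDiff Φ2 B').card]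
end ProdClosure

section Abelian

lemma comm_unifAmenable (G : Type) [CommGroup G] [DecidableEq G] : IsUnifAmenable G := by
  classical
  refine ⟨fun n ε => (⌈(2 : ℝ) * (n + 1) / ε⌉₊) ^ n, ?_⟩
  intro Ψ n ε hn hε0 hε1
  set ε' := ε / (n + 1) with hε'def
  have hε'0 : 0 < ε' := eps_div_pos hε0
  set ι := {x // x ∈ Ψ} with hιdef
  set m := Ψ.card with hm
  have hmcard : Fintype.card ι = m := Fintype.card_coe Ψ
  set A := ι → Multiplicative ℤ with hA
  letI : DecidableEq A := Classical.decEq A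
  -- the homomorphism
  set φ : A →* G := MonoidHom.mk' (fun f => ∏ i : ι, (i : G) ^ (Multiplicative.toAdd (f i)))
    (by
      intro f g
      rw [← Finset.prod_mul_distrib]
      refine Finset.prod_congr rfl fun i _ => ?_
      show (i : G) ^ (Multiplicative.toAdd (f i) + Multiplicative.toAdd (g i)) = _
      rw [zpow_add]) with hφdef
  set e : ι → A := fun i => Pi.mulSingle i (Multiplicative.ofAdd 1) with hedef
  have hφe : ∀ i : ι, φ (e i) = (i : G) := by
    intro i
    simp only [hφdef, hedef, MonoidHom.mk'_apply]
    rw [Fintype.prod_eq_single i (fun j hj => by simp [Pi.mulSingle_eq_of_ne hj])]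
    simp
  -- the box
  set N := ⌈(2 : ℝ) * (n + 1) / ε⌉₊ with hN
  have hNbig : (2 : ℝ) ≤ ε' * N := by
    have h1 : ((2 : ℝ) * (n + 1) / ε) ≤ (N : ℝ) := Nat.le_ceil _
    have h2 : (2 : ℝ) / ε' = 2 * (n + 1) / ε := by
      rw [hε'def, div_div_eq_mul_div]
    have h3 : (2 : ℝ) / ε' ≤ N := by rw [h2]; exact h1
    calc (2 : ℝ) = ε' * (2 / ε') := by field_simp
      _ ≤ ε' * N := by nlinarith
  have hNpos : 0 < N := by
    rcases Nat.eq_zero_or_pos N with h | h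
    · exfalso
      rw [h] at hNbig
      norm_num at hNbig
    · exact h
  set R : Finset (Multiplicative ℤ) :=
    (Finset.range N).image (fun t : ℕ => Multiplicative.ofAdd (t : ℤ)) with hR
  have hRcard : R.card = N := by
    rw [hR, Finset.card_image_of_injective, Finset.card_range]
    intro a b hab
    have := Multiplicative.ofAdd.injective hab
    exact_mod_cast this
  have hRne : R.Nonempty := by
    rw [← Finset.card_pos, hRcard]; exact hNpos
  set Box : Finset A := Fintype.piFinset (fun _ : ι => R) with hBox
  have hBoxcard : Box.card = N ^ m := by
    rw [hBox, Fintype.card_piFinset]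
    simp [hRcard, hmcard]
  have hBoxne : Box.Nonempty := by
    rw [← Finset.card_pos, hBoxcard]
    exact pow_pos hNpos m
  have hRmem : ∀ x : Multiplicative ℤ,
      x ∈ R ↔ 0 ≤ Multiplicative.toAdd x ∧ Multiplicative.toAdd x < (N : ℤ) := by
    intro x
    rw [hR, Finset.mem_image]
    constructor
    · rintro ⟨t, ht, rfl⟩
      rw [Finset.mem_range] at ht
      simp only [toAdd_ofAdd]
      omega
    · rintro ⟨h0, hNlt⟩
      refine ⟨(Multiplicative.toAdd x).toNat, Finset.mem_range.mpr (by omega), ?_⟩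
      rw [Int.toNat_of_nonneg h0]
      exact ofAdd_toAdd x
  have hei : ∀ i j : ι, Multiplicative.toAdd (e i j) = if j = i then 1 else 0 := by
    intro i j
    by_cases hji : j = i
    · subst hji
      rw [if_pos rfl, hedef]
      simp
    · rw [if_neg hji, hedef]
      simp [Pi.mulSingle_eq_of_ne hji]
  -- slab cardinality
  have hslab : ∀ (c : Multiplicative ℤ) (i : ι),
      (Fintype.piFinset (fun j => if j = i then ({c} : Finset (Multiplicative ℤ)) else R)).card
        = N ^ (m - 1) := by
    intro c i
    rw [Fintype.card_piFinset]
    rw [← Finset.mul_prod_erase Finset.univ _ (Finset.mem_univ i)]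
    rw [if_pos rfl, Finset.card_singleton, one_mul]
    rw [Finset.prod_congr rfl (fun j hj => by
      rw [if_neg (Finset.ne_of_mem_erase hj), hRcard])]
    rw [Finset.prod_const, Finset.card_erase_of_mem (Finset.mem_univ i), Finset.card_univ, hmcard]
  have hmemimg : ∀ (i : ι) (f : A), f ∈ Box.image (e i * ·) ↔ (e i)⁻¹ * f ∈ Box := by
    intro i f
    rw [Finset.mem_image]
    constructor
    · rintro ⟨g, hg, rfl⟩
      rwa [inv_mul_cancel_left]
    · intro h
      exact ⟨(e i)⁻¹ * f, h, mul_inv_cancel_left _ _⟩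
  have hsymm : ∀ i : ι, (symmDiff Box (Box.image (e i * ·))).card ≤ 2 * N ^ (m - 1) := by
    intro i
    set S0 := Fintype.piFinset
      (fun j => if j = i then ({Multiplicative.ofAdd (0 : ℤ)} : Finset (Multiplicative ℤ)) else R)
      with hS0
    set SN := Fintype.piFinset
      (fun j => if j = i then ({Multiplicative.ofAdd (N : ℤ)} : Finset (Multiplicative ℤ)) else R)
      with hSN
    have hsub : symmDiff Box (Box.image (e i * ·)) ⊆ S0 ∪ SN := by
      intro f hf
      rcases Finset.mem_symmDiff.mp hf with ⟨hfB, hfI⟩ | ⟨hfI, hfB⟩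
      · have hfR : ∀ j, 0 ≤ Multiplicative.toAdd (f j) ∧ Multiplicative.toAdd (f j) < (N : ℤ) :=
          fun j => (hRmem _).mp (Fintype.mem_piFinset.mp hfB j)
        have htoAddmul : ∀ j, Multiplicative.toAdd (((e i)⁻¹ * f) j)
            = -(if j = i then 1 else 0) + Multiplicative.toAdd (f j) := by
          intro j
          rw [Pi.mul_apply, Pi.inv_apply, toAdd_mul, toAdd_inv, hei i j]
        have hfi : Multiplicative.toAdd (f i) = 0 := by
          by_contra hne
          apply hfI
          rw [hmemimg]
          rw [Fintype.mem_piFinset]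
          intro j
          rw [hRmem, htoAddmul j]
          by_cases hji : j = i
          · subst hji
            rw [if_pos rfl]
            have := hfR j
            omega
          · rw [if_neg hji]
            have := hfR j
            omega
        refine Finset.mem_union_left _ (Fintype.mem_piFinset.mpr fun j => ?_)
        by_cases hji : j = i
        · subst hji
          rw [if_pos rfl, Finset.mem_singleton]
          rw [← ofAdd_toAdd (f j), hfi]
        · rw [if_neg hji]
          exact Fintype.mem_piFinset.mp hfB j
      · obtain ⟨g, hg, rfl⟩ := Finset.mem_image.mp hfI
        have hgR : ∀ j, 0 ≤ Multiplicative.toAdd (g j) ∧ Multiplicative.toAdd (g j) < (N : ℤ) :=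
          fun j => (hRmem _).mp (Fintype.mem_piFinset.mp hg j)
        have htoAddmul : ∀ j, Multiplicative.toAdd ((e i * g) j)
            = (if j = i then 1 else 0) + Multiplicative.toAdd (g j) := by
          intro j
          rw [Pi.mul_apply, toAdd_mul, hei i j]
        have hfi : Multiplicative.toAdd ((e i * g) i) = (N : ℤ) := by
          by_contra hne
          apply hfB
          rw [Fintype.mem_piFinset]
          intro j
          rw [hRmem, htoAddmul j]
          by_cases hji : j = i
          · subst hji
            rw [if_pos rfl]
            have h1 := hgR j
            have h2 : Multiplicative.toAdd ((e j * g) j) ≠ (N : ℤ) := hne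
            rw [htoAddmul j, if_pos rfl] at h2
            omega
          · rw [if_neg hji]
            have := hgR j
            omega
        refine Finset.mem_union_right _ (Fintype.mem_piFinset.mpr fun j => ?_)
        by_cases hji : j = i
        · subst hji
          rw [if_pos rfl, Finset.mem_singleton]
          rw [← ofAdd_toAdd ((e j * g) j), hfi]
        · rw [if_neg hji]
          have : Multiplicative.toAdd ((e i * g) j) = Multiplicative.toAdd (g j) := by
            rw [htoAddmul j, if_neg hji]; ring
          rw [hRmem, this]
          exact hgR j
    calc (symmDiff Box (Box.image (e i * ·))).card ≤ (S0 ∪ SN).card :=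
          Finset.card_le_card hsub
      _ ≤ S0.card + SN.card := Finset.card_union_le _ _
      _ = 2 * N ^ (m - 1) := by rw [hS0, hSN, hslab, hslab]; ring
  -- real bound for the box
  have hboxbd : ∀ i : ι, ((symmDiff Box (Box.image (e i * ·))).card : ℝ) ≤ ε' * Box.card := by
    intro i
    have hmpos : 0 < m := by
      rw [← hmcard]
      exact Fintype.card_pos_iff.mpr ⟨i⟩
    have h1 : ((symmDiff Box (Box.image (e i * ·))).card : ℝ) ≤ 2 * (N : ℝ) ^ (m - 1) := by
      exact_mod_cast hsymm i
    have h2 : (2 : ℝ) * (N : ℝ) ^ (m - 1) ≤ ε' * (N : ℝ) ^ m := by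
      have hX : (0 : ℝ) ≤ (N : ℝ) ^ (m - 1) := by positivity
      have h3 : (N : ℝ) ^ m = (N : ℝ) * (N : ℝ) ^ (m - 1) := by
        rw [← pow_succ']
        congr 1
        omega
      rw [h3, ← mul_assoc]
      exact mul_le_mul_of_nonneg_right hNbig hX
    rw [hBoxcard]
    push_cast
    calc ((symmDiff Box (Box.image (e i * ·))).card : ℝ) ≤ 2 * (N : ℝ) ^ (m - 1) := h1
      _ ≤ ε' * (N : ℝ) ^ m := h2
  -- sum over the generators and push forward
  set Ψ' : Finset A := Finset.univ.image e with hΨ'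
  have hsum : ∑ γ ∈ Ψ', ((symmDiff Box (Box.image (γ * ·))).card : ℝ)
      ≤ ((n : ℝ) * ε') * Box.card := by
    calc ∑ γ ∈ Ψ', ((symmDiff Box (Box.image (γ * ·))).card : ℝ)
        ≤ ∑ _γ ∈ Ψ', ε' * Box.card := by
          refine Finset.sum_le_sum (fun γ hγ => ?_)
          obtain ⟨i, _, rfl⟩ := Finset.mem_image.mp hγ
          exact hboxbd i
      _ = (Ψ'.card : ℝ) * (ε' * Box.card) := by rw [Finset.sum_const, nsmul_eq_mul]
      _ ≤ ((n : ℝ) * ε') * Box.card := by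
          rw [← mul_assoc]
          have hc1 : Ψ'.card ≤ n := by
            calc Ψ'.card ≤ Finset.univ.card := Finset.card_image_le
              _ = m := by rw [Finset.card_univ, hmcard]
              _ ≤ n := hn
          have h1 : (Ψ'.card : ℝ) ≤ (n : ℝ) := by exact_mod_cast hc1
          have h2 : (0:ℝ) ≤ ε' * Box.card := by positivity
          nlinarith
  obtain ⟨Φ', hne', hcard', hbd'⟩ := pushforward φ Box hBoxne Ψ' ((n : ℝ) * ε') hsum
  refine ⟨Φ', hne', ?_, ?_⟩
  · calc Φ'.card ≤ Box.card := hcard'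
      _ = N ^ m := hBoxcard
      _ ≤ N ^ n := Nat.pow_le_pow_right hNpos hn
  · intro γ hγ
    have hiq : e ⟨γ, hγ⟩ ∈ Ψ' := Finset.mem_image_of_mem e (Finset.mem_univ _)
    have hterm : ((symmDiff Φ' (Φ'.image (φ (e ⟨γ, hγ⟩) * ·))).card : ℝ)
        ≤ ∑ γ' ∈ Ψ', ((symmDiff Φ' (Φ'.image (φ γ' * ·))).card : ℝ) :=
      Finset.single_le_sum (f := fun γ' => ((symmDiff Φ' (Φ'.image (φ γ' * ·))).card : ℝ))
        (fun γ' _ => Nat.cast_nonneg _) hiq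
    rw [hφe ⟨γ, hγ⟩] at hterm
    calc ((symmDiff Φ' (Φ'.image (γ * ·))).card : ℝ)
        ≤ ((n : ℝ) * ε') * Φ'.card := le_trans hterm hbd'
      _ ≤ ε * Φ'.card :=
          mul_le_mul_of_nonneg_right (n_mul_eps_div_le hε0) (Nat.cast_nonneg _)
end Abelian

section Extension
variable {G : Type} [Group G] [DecidableEq G]

lemma card_escape_le {H : Type*} [Group H] [DecidableEq H] (S : Finset H) (v : H) :
    (S.filter (fun x => v * x ∉ S)).card ≤ (symmDiff S (S.image (v * ·))).card := by
  rw [← Finset.card_image_of_injective (S.filter (fun x => v * x ∉ S)) (mul_right_injective v)]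
  apply Finset.card_le_card
  intro y hy
  obtain ⟨x, hx, rfl⟩ := Finset.mem_image.mp hy
  obtain ⟨hxS, hnot⟩ := Finset.mem_filter.mp hx
  exact sdiff_subset_symmDiff _ _
    (Finset.mem_sdiff.mpr ⟨Finset.mem_image_of_mem _ hxS, hnot⟩)

lemma extension_closure (N : Subgroup G) [N.Normal] [DecidableEq ↥N] [DecidableEq (G ⧸ N)]
    (hN : IsUnifAmenable ↥N) (hQ : IsUnifAmenable (G ⧸ N)) : IsUnifAmenable G := by
  obtain ⟨FN, hFN⟩ := hN
  obtain ⟨FQ, hFQ⟩ := hQ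
  refine ⟨fun n ε => FQ n (ε / 4) * FN (n * FQ n (ε / 4)) (ε / 4), ?_⟩
  intro Ψ n ε hn hε0 hε1
  have hδ0 : 0 < ε / 4 := by linarith
  have hδ1 : ε / 4 < 1 := by linarith
  set π : G →* G ⧸ N := QuotientGroup.mk' N with hπ
  set ΨQ := Ψ.image π with hΨQ
  obtain ⟨B, hBne, hBcard, hBbd⟩ := hFQ ΨQ n (ε / 4)
    (le_trans Finset.card_image_le hn) hδ0 hδ1
  have hout : ∀ b : G ⧸ N, π b.out = b := fun b => QuotientGroup.out_eq' b
  have hνmem : ∀ (γ : G) (b : G ⧸ N), (π γ * b).out⁻¹ * γ * b.out ∈ N := by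
    intro γ b
    have h1 : π ((π γ * b).out⁻¹ * γ * b.out) = 1 := by
      rw [map_mul, map_mul, map_inv, hout, hout]
      group
    exact (QuotientGroup.eq_one_iff _).mp h1
  set ν : G → G ⧸ N → ↥N := fun γ b => ⟨(π γ * b).out⁻¹ * γ * b.out, hνmem γ b⟩ with hν
  set V := (Ψ ×ˢ B).image (fun p => ν p.1 p.2) with hV
  have hVcard : V.card ≤ n * FQ n (ε / 4) := by
    calc V.card ≤ (Ψ ×ˢ B).card := Finset.card_image_le
      _ = Ψ.card * B.card := Finset.card_product _ _
      _ ≤ n * FQ n (ε / 4) := Nat.mul_le_mul hn hBcard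
  obtain ⟨A, hAne, hAcard, hAbd⟩ := hFN V (n * FQ n (ε / 4)) (ε / 4) hVcard hδ0 hδ1
  set fmap : (G ⧸ N) × ↥N → G := fun p => p.1.out * (p.2 : G) with hfmap
  have hfinj : Function.Injective fmap := by
    rintro ⟨b, a⟩ ⟨b', a'⟩ h
    simp only [hfmap] at h
    have hb : b = b' := by
      have h2 := congrArg π h
      rw [map_mul, map_mul, hout, hout] at h2
      have ha1 : π (a : G) = 1 := (QuotientGroup.eq_one_iff _).mpr a.2
      have ha1' : π (a' : G) = 1 := (QuotientGroup.eq_one_iff _).mpr a'.2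
      rw [ha1, ha1', mul_one, mul_one] at h2
      exact h2
    subst hb
    exact Prod.ext rfl (Subtype.ext (mul_left_cancel h))
  set Φ := (B ×ˢ A).image fmap with hΦ
  have hΦcard : Φ.card = B.card * A.card := by
    rw [hΦ, Finset.card_image_of_injective _ hfinj, Finset.card_product]
  refine ⟨Φ, ?_, ?_, ?_⟩
  · rw [hΦ]; exact ((hBne.product hAne).image fmap)
  · rw [hΦcard]; exact Nat.mul_le_mul hBcard hAcard
  intro γ hγ
  set T := Φ.image (γ * ·) with hT
  have hTcard : T.card = Φ.card := by
    rw [hT]; exact Finset.card_image_of_injective _ (mul_right_injective γ)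
  -- the key algebraic identity
  have hkey : ∀ p : (G ⧸ N) × ↥N, γ * fmap p = fmap (π γ * p.1, ν γ p.1 * p.2) := by
    rintro ⟨b, a⟩
    simp only [hfmap, hν]
    show γ * (b.out * (a : G)) = (π γ * b).out * (((π γ * b).out⁻¹ * γ * b.out) * (a : G))
    group
  -- bad pairs
  set Bad1 := (B ×ˢ A).filter (fun p => π γ * p.1 ∉ B) with hBad1
  set Bad2 := (B ×ˢ A).filter (fun p => π γ * p.1 ∈ B ∧ ν γ p.1 * p.2 ∉ A) with hBad2
  have hTsub : T \ Φ ⊆ (Bad1 ∪ Bad2).image (fun p => γ * fmap p) := by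
    intro x hx
    obtain ⟨hxT, hxΦ⟩ := Finset.mem_sdiff.mp hx
    rw [hT] at hxT
    obtain ⟨y, hy, rfl⟩ := Finset.mem_image.mp hxT
    rw [hΦ] at hy
    obtain ⟨p, hp, rfl⟩ := Finset.mem_image.mp hy
    by_cases hgood : π γ * p.1 ∈ B ∧ ν γ p.1 * p.2 ∈ A
    · exfalso
      apply hxΦ
      rw [hkey p, hΦ]
      exact Finset.mem_image_of_mem fmap (Finset.mem_product.mpr ⟨hgood.1, hgood.2⟩)
    · apply Finset.mem_image_of_mem
      rw [Finset.mem_union, hBad1, hBad2]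
      by_cases hb : π γ * p.1 ∈ B
      · refine Or.inr (Finset.mem_filter.mpr ⟨hp, hb, ?_⟩)
        tauto
      · exact Or.inl (Finset.mem_filter.mpr ⟨hp, hb⟩)
  -- bound Bad1
  have hγQ : π γ ∈ ΨQ := by rw [hΨQ]; exact Finset.mem_image_of_mem π hγ
  have hBad1card : (Bad1.card : ℝ) ≤ (ε / 4) * (B.card * A.card) := by
    have h1 : Bad1 = (B.filter (fun b => π γ * b ∉ B)) ×ˢ A := by
      ext ⟨b, a⟩
      simp only [hBad1, Finset.mem_filter, Finset.mem_product]
      tauto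
    rw [h1, Finset.card_product]
    have h2 : ((B.filter (fun b => π γ * b ∉ B)).card : ℝ) ≤ (ε / 4) * B.card := by
      calc ((B.filter (fun b => π γ * b ∉ B)).card : ℝ)
          ≤ ((symmDiff B (B.image (π γ * ·))).card : ℝ) := by
            exact_mod_cast card_escape_le B (π γ)
        _ ≤ (ε / 4) * B.card := hBbd (π γ) hγQ
    push_cast
    calc ((B.filter (fun b => π γ * b ∉ B)).card : ℝ) * A.card
        ≤ ((ε / 4) * B.card) * A.card :=
          mul_le_mul_of_nonneg_right h2 (Nat.cast_nonneg _)
      _ = (ε / 4) * (B.card * A.card) := by ring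
  -- bound Bad2
  have hBad2card : (Bad2.card : ℝ) ≤ (ε / 4) * (B.card * A.card) := by
    have hsub2 : Bad2 ⊆ B.biUnion (fun b => {b} ×ˢ (A.filter (fun a => ν γ b * a ∉ A))) := by
      rintro ⟨b, a⟩ hp
      rw [hBad2] at hp
      obtain ⟨hpBA, _, hpA⟩ := Finset.mem_filter.mp hp
      obtain ⟨hb, ha⟩ := Finset.mem_product.mp hpBA
      refine Finset.mem_biUnion.mpr ⟨b, hb, ?_⟩
      rw [Finset.mem_product]
      exact ⟨Finset.mem_singleton_self b, Finset.mem_filter.mpr ⟨ha, hpA⟩⟩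
    have h1 : Bad2.card ≤ ∑ b ∈ B, (A.filter (fun a => ν γ b * a ∉ A)).card := by
      calc Bad2.card ≤ (B.biUnion (fun b => {b} ×ˢ (A.filter (fun a => ν γ b * a ∉ A)))).card :=
            Finset.card_le_card hsub2
        _ ≤ ∑ b ∈ B, ({b} ×ˢ (A.filter (fun a => ν γ b * a ∉ A))).card :=
            Finset.card_biUnion_le
        _ = ∑ b ∈ B, (A.filter (fun a => ν γ b * a ∉ A)).card := by
            refine Finset.sum_congr rfl fun b _ => ?_
            rw [Finset.card_product, Finset.card_singleton, one_mul]
    have h2 : ∀ b ∈ B, ((A.filter (fun a => ν γ b * a ∉ A)).card : ℝ) ≤ (ε / 4) * A.card := by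
      intro b hb
      have hνV : ν γ b ∈ V := by
        have hmem : (γ, b) ∈ Ψ ×ˢ B := Finset.mem_product.mpr ⟨hγ, hb⟩
        rw [hV]
        exact Finset.mem_image.mpr ⟨(γ, b), hmem, rfl⟩
      calc ((A.filter (fun a => ν γ b * a ∉ A)).card : ℝ)
          ≤ ((symmDiff A (A.image (ν γ b * ·))).card : ℝ) := by
            exact_mod_cast card_escape_le A (ν γ b)
        _ ≤ (ε / 4) * A.card := hAbd (ν γ b) hνV
    calc (Bad2.card : ℝ) ≤ ((∑ b ∈ B, (A.filter (fun a => ν γ b * a ∉ A)).card : ℕ) : ℝ) := by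
          exact_mod_cast h1
      _ = ∑ b ∈ B, ((A.filter (fun a => ν γ b * a ∉ A)).card : ℝ) := by rw [Nat.cast_sum]
      _ ≤ ∑ _b ∈ B, (ε / 4) * (A.card : ℝ) := Finset.sum_le_sum h2
      _ = (B.card : ℝ) * ((ε / 4) * A.card) := by rw [Finset.sum_const, nsmul_eq_mul]
      _ = (ε / 4) * (B.card * A.card) := by ring
  -- assemble
  have hTdiff : ((T \ Φ).card : ℝ) ≤ (ε / 2) * Φ.card := by
    calc ((T \ Φ).card : ℝ)
        ≤ (((Bad1 ∪ Bad2).image (fun p => γ * fmap p)).card : ℝ) := by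
          exact_mod_cast Finset.card_le_card hTsub
      _ ≤ ((Bad1 ∪ Bad2).card : ℝ) := by exact_mod_cast Finset.card_image_le
      _ ≤ (Bad1.card : ℝ) + Bad2.card := by exact_mod_cast Finset.card_union_le _ _
      _ ≤ (ε / 4) * (B.card * A.card) + (ε / 4) * (B.card * A.card) := by
          linarith
      _ = (ε / 2) * (B.card * A.card) := by ring
      _ = (ε / 2) * Φ.card := by rw [hΦcard]; push_cast; ring
  have hsd : (symmDiff Φ T).card = 2 * (T \ Φ).card :=
    card_symmDiff_of_card_eq hTcard.symm
  calc ((symmDiff Φ T).card : ℝ) = 2 * ((T \ Φ).card : ℝ) := by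
        rw [hsd]; push_cast; ring
    _ ≤ 2 * ((ε / 2) * Φ.card) := by linarith
    _ = ε * Φ.card := by ring
end Extension

section Solvable

lemma derivedSeries_coe_eq_bot {G : Type} [Group G] (k : ℕ)
    (h : derivedSeries G (k + 1) = ⊥) : derivedSeries ↥(derivedSeries G 1) k = ⊥ := by
  have key : ∀ j, (derivedSeries ↥(derivedSeries G 1) j).map (derivedSeries G 1).subtype
      ≤ derivedSeries G (j + 1) := by
    intro j
    induction j with
    | zero =>
      rw [derivedSeries_zero, ← MonoidHom.range_eq_map, Subgroup.range_subtype]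
    | succ j ih =>
      rw [derivedSeries_succ (↥(derivedSeries G 1)) j, Subgroup.map_commutator,
        derivedSeries_succ G (j + 1)]
      exact Subgroup.commutator_mono ih ih
  have hb := le_bot_iff.mp (h ▸ key k)
  exact (Subgroup.map_eq_bot_iff_of_injective _ (Subgroup.subtype_injective _)).mp hb

lemma solvable_aux : ∀ (k : ℕ) (G : Type) [Group G] [DecidableEq G],
    derivedSeries G k = ⊥ → IsUnifAmenable G := by
  intro k
  induction k with
  | zero =>
    intro G _ _ h
    have h1 : ∀ x : G, x = 1 := by
      intro x
      have hx : x ∈ derivedSeries G 0 := by rw [derivedSeries_zero]; exact Subgroup.mem_top x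
      rw [h] at hx
      exact Subgroup.mem_bot.mp hx
    refine ⟨fun _ _ => 1, ?_⟩
    intro Ψ n ε hn hε0 hε1
    refine ⟨{1}, Finset.singleton_nonempty 1, le_rfl, ?_⟩
    intro γ hγ
    have himg : ({1} : Finset G).image (γ * ·) = {1} := by
      rw [h1 γ]; simp
    rw [himg, symmDiff_self]
    simp only [Finset.bot_eq_empty, Finset.card_empty, Nat.cast_zero, Finset.card_singleton,
      Nat.cast_one, mul_one]
    positivity
  | succ k ih =>
    intro G _ _ h
    haveI : (derivedSeries G 1).Normal := derivedSeries_normal G 1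
    letI : DecidableEq (G ⧸ derivedSeries G 1) := Classical.decEq _
    have hN : IsUnifAmenable ↥(derivedSeries G 1) :=
      ih ↥(derivedSeries G 1) (derivedSeries_coe_eq_bot k h)
    have hQ : IsUnifAmenable (G ⧸ derivedSeries G 1) := by
      letI : DecidableEq (Abelianization G) := Classical.decEq _
      obtain ⟨F, hF⟩ := comm_unifAmenable (Abelianization G)
      have hle : commutator G ≤ (derivedSeries G 1).comap (MonoidHom.id G) := by
        rw [Subgroup.comap_id, ← derivedSeries_one]
      set ψ : Abelianization G →* G ⧸ derivedSeries G 1 :=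
        QuotientGroup.map (commutator G) (derivedSeries G 1) (MonoidHom.id G) hle with hψ
      have hψs : Function.Surjective ψ := by
        intro x
        obtain ⟨g, rfl⟩ := QuotientGroup.mk_surjective x
        exact ⟨Abelianization.of g, by rw [hψ]; exact QuotientGroup.map_mk _ _ _ _ g⟩
      exact ⟨_, quotient_closure F hF ψ hψs⟩
    exact extension_closure (derivedSeries G 1) hN hQ
end Solvable


/-- Every solvable group is uniformly amenable; uniform amenability passes to subgroups
(with a Følner function depending only on the original one), to homomorphic images, and
to finite (binary) direct products. -/
theorem unifAmenable_closure_properties :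
    (∀ (G : Type) [Group G] [DecidableEq G], IsSolvable G → IsUnifAmenable G) ∧
    (∃ T : (ℕ → ℝ → ℕ) → (ℕ → ℝ → ℕ),
      ∀ (G : Type) [Group G] [DecidableEq G] (F : ℕ → ℝ → ℕ),
        IsUnifAmenableWith G F → ∀ H : Subgroup G, IsUnifAmenableWith H (T F)) ∧
    (∀ (G K : Type) [Group G] [DecidableEq G] [Group K] [DecidableEq K]
        (φ : G →* K), Function.Surjective φ → IsUnifAmenable G → IsUnifAmenable K) ∧
    (∀ (G K : Type) [Group G] [DecidableEq G] [Group K] [DecidableEq K],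
      IsUnifAmenable G → IsUnifAmenable K → IsUnifAmenable (G × K)) := by
  refine ⟨?_, ⟨fun F n ε => F n (ε / (n + 1)), ?_⟩, ?_, ?_⟩
  · intro G _ _ hs
    obtain ⟨k, hk⟩ := hs.solvable
    exact solvable_aux k G hk
  · intro G _ _ F hF H
    exact subgroup_closure F hF H
  · intro G K _ _ _ _ φ hφ hG
    obtain ⟨F, hF⟩ := hG
    exact ⟨_, quotient_closure F hF φ hφ⟩
  · intro G K _ _ _ _ hG hK
    exact prod_closure hG hK
end

section
/- Let p be a non-principal ultrafilter on ℕ, (Γ_n) a sequence of groups, Γ_* their ultraproduct, and for each n let A_n ⊆ Γ_n, with A_* = ∏_{n→p} A_n the internal subset of Γ_*. Then st(lim_{n→p} BD_{Γ_n}(A_n)) = inf{ st(lim_{n→p} m_n(A_n)) : m_n an invariant finitely additive probability measure on Γ_n for each n }, where BD_{Γ_n} denotes lower Banach density and st denotes the standard part. -/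
open Filter

/-- An invariant finitely additive probability measure on the discrete group `G`. -/
def IsInvFAPM {G : Type} [Group G] (ν : Set G → ℝ) : Prop :=
  (∀ E : Set G, 0 ≤ ν E) ∧ (∀ E : Set G, ν E ≤ 1) ∧ ν Set.univ = 1 ∧
  (∀ E F : Set G, Disjoint E F → ν (E ∪ F) = ν E + ν F) ∧
  (∀ (γ : G) (E : Set G), ν ((γ * ·) '' E) = ν E)

/-- The lower Banach density of `A ⊆ G`. -/
noncomputable def lowerBD {G : Type} [Group G] (A : Set G) : ℝ :=
  sInf {x : ℝ | ∃ ν : Set G → ℝ, IsInvFAPM ν ∧ x = ν A}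

/-- Bounded sequences have ultralimits in `[0,1]`. -/
lemma exists_ultralim (p : Ultrafilter ℕ) (f : ℕ → ℝ) (hf : ∀ n, f n ∈ Set.Icc (0:ℝ) 1) :
    ∃ L ∈ Set.Icc (0:ℝ) 1, Tendsto f (p : Filter ℕ) (nhds L) := by
  have hle : ↑(p.map f) ≤ Filter.principal (Set.Icc (0:ℝ) 1) :=
    Filter.le_principal_iff.mpr (Filter.Eventually.of_forall (f := (p : Filter ℕ)) hf)
  obtain ⟨L, hL, hL2⟩ := isCompact_Icc.ultrafilter_le_nhds (p.map f) hle
  exact ⟨L, hL, hL2⟩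

lemma lowerBD_mem (G : Type) [Group G] (A : Set G) (ν : Set G → ℝ) (hν : IsInvFAPM ν) :
    lowerBD A ∈ Set.Icc (0:ℝ) 1 ∧ lowerBD A ≤ ν A := by
  set T := {x : ℝ | ∃ ν : Set G → ℝ, IsInvFAPM ν ∧ x = ν A} with hT
  have hbdd : BddBelow T := ⟨0, by rintro x ⟨μ, hμ, rfl⟩; exact hμ.1 A⟩
  have hmem : ν A ∈ T := ⟨ν, hν, rfl⟩
  have hle : sInf T ≤ ν A := csInf_le hbdd hmem
  refine ⟨⟨le_csInf ⟨ν A, hmem⟩ ?_, hle.trans (hν.2.1 A)⟩, hle⟩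
  rintro x ⟨μ, hμ, rfl⟩; exact hμ.1 A

/-- The standard part of the ultralimit of the lower Banach densities `BD_{Γ_n}(A_n)`
equals the infimum, over all choices of invariant finitely additive probability measures
`m_n` on `Γ_n`, of the standard part of the ultralimit of `m_n(A_n)`. (Ultralimits of
bounded real sequences along `p` are expressed via `Tendsto _ ↑p (nhds _)`.) -/
theorem ultralimit_lowerBD (p : Ultrafilter ℕ) (hp : ∀ a : ℕ, p ≠ (pure a : Ultrafilter ℕ))
    (Γ : ℕ → Type) [∀ n, Group (Γ n)]
    (hamen : ∀ n, ∃ ν : Set (Γ n) → ℝ, IsInvFAPM ν)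
    (A : ∀ n, Set (Γ n)) :
    ∃ L : ℝ, Tendsto (fun n => lowerBD (A n)) (p : Filter ℕ) (nhds L) ∧
      L = sInf {x : ℝ | ∃ m : ∀ n, Set (Γ n) → ℝ,
            (∀ n, IsInvFAPM (m n)) ∧
            Tendsto (fun n => m n (A n)) (p : Filter ℕ) (nhds x)} := by
  classical
  choose ν hν using hamen
  have hbd : ∀ n, lowerBD (A n) ∈ Set.Icc (0:ℝ) 1 :=
    fun n => (lowerBD_mem _ (A n) (ν n) (hν n)).1
  obtain ⟨L, hLmem, hL⟩ := exists_ultralim p _ hbd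
  set S := {x : ℝ | ∃ m : ∀ n, Set (Γ n) → ℝ,
      (∀ n, IsInvFAPM (m n)) ∧
      Tendsto (fun n => m n (A n)) (p : Filter ℕ) (nhds x)} with hS
  -- S is nonempty
  obtain ⟨x0, hx0mem, hx0⟩ := exists_ultralim p (fun n => ν n (A n))
    (fun n => ⟨(hν n).1 _, (hν n).2.1 _⟩)
  have hSne : S.Nonempty := ⟨x0, ν, hν, hx0⟩
  have hSbdd : BddBelow S := by
    refine ⟨0, ?_⟩
    rintro x ⟨m, hm, hx⟩
    exact le_of_tendsto_of_tendsto' tendsto_const_nhds hx (fun n => (hm n).1 _)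
  refine ⟨L, hL, le_antisymm ?_ ?_⟩
  · -- L ≤ sInf S
    refine le_csInf hSne ?_
    rintro x ⟨m, hm, hx⟩
    exact le_of_tendsto_of_tendsto' hL hx
      (fun n => (lowerBD_mem _ (A n) (m n) (hm n)).2)
  · -- sInf S ≤ L
    refine le_of_forall_pos_le_add ?_
    intro ε hε
    have hchoice : ∀ n, ∃ μ : Set (Γ n) → ℝ, IsInvFAPM μ ∧ μ (A n) < lowerBD (A n) + ε := by
      intro n
      obtain ⟨a, ⟨μ, hμ, rfl⟩, ha⟩ :=
        Real.lt_sInf_add_pos (s := {x : ℝ | ∃ μ : Set (Γ n) → ℝ, IsInvFAPM μ ∧ x = μ (A n)})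
          ⟨ν n (A n), ν n, hν n, rfl⟩ hε
      exact ⟨μ, hμ, ha⟩
    choose m hm hmlt using hchoice
    obtain ⟨x, hxmem, hx⟩ := exists_ultralim p (fun n => m n (A n))
      (fun n => ⟨(hm n).1 _, (hm n).2.1 _⟩)
    have hxS : x ∈ S := ⟨m, hm, hx⟩
    have hxle : x ≤ L + ε :=
      le_of_tendsto_of_tendsto' hx (hL.add_const ε) (fun n => (hmlt n).le)
    exact (csInf_le hSbdd hxS).trans hxle
end
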